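/- arXiv:1809.00714 — 4 statements merged into one kernel-verified Lean document; each statement's English description precedes it below -/
import Mathlib

section
/- Let N ≥ 2, p ∈ [2,∞), q = (N+2)/(N+p), ε > 0. Let A be a symmetric N×N real matrix, b ∈ ℝ^N, c ∈ ℝ, and let φ(y) = c + bᵀy + (1/2)yᵀAy. Then for every x ∈ ℝ^N, 2(N+p)·(M^ε φ(x) − φ(x)) = ε²·(tr A + (p−2)·λ_max(A)), i.e. C_{N,p}(M^ε φ(x) − φ(x))/ε² = D_p φ with C_{N,p} = 2(N+p), where λ_max(A) = sup_{|ξ|=1} ξᵀAξ is the largest eigenvalue of A. -/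
open MeasureTheory Metric Set
open scoped ENNReal NNReal Classical

noncomputable section

abbrev EucN (N : ℕ) := EuclideanSpace ℝ (Fin N)

variable {N : ℕ}

/-- The directional mean value operator `M^ε_ξ v (x)`. -/
def mveOp (q ε : ℝ) (v : EucN N → ℝ) (ξ x : EucN N) : ℝ :=
  q * (⨍ y in ball x ε, v y) + (1 - q) * ((v (x + ε • ξ) + v (x - ε • ξ)) / 2)

/-- The mean value operator `M^ε v (x) = sup_{|ξ|=1} M^ε_ξ v (x)`. -/
def mvOp (q ε : ℝ) (v : EucN N → ℝ) (x : EucN N) : ℝ :=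
  ⨆ ξ : sphere (0 : EucN N) 1, mveOp q ε v (ξ : EucN N) x

/-- `λ_max(A) = sup_{|ξ|=1} ξᵀAξ`, the largest eigenvalue of a symmetric matrix `A`. -/
def lamMax (A : Matrix (Fin N) (Fin N) ℝ) : ℝ :=
  ⨆ ξ : sphere (0 : EucN N) 1, ∑ i, ∑ j, (ξ : EucN N) i * A i j * (ξ : EucN N) j

/-! ### Auxiliary lemmas -/

lemma coord_continuous (i : Fin N) : Continuous fun z : EucN N => z i :=
  (EuclideanSpace.proj i).continuous

lemma integrableOn_ball_of_continuous {f : EucN N → ℝ} (hf : Continuous f) (ε : ℝ) :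
    IntegrableOn f (ball (0 : EucN N) ε) volume :=
  ((hf.locallyIntegrable).integrableOn_isCompact (isCompact_closedBall _ _)).mono_set
    ball_subset_closedBall

/-- Change of variable by a linear isometry equivalence fixing `0`. -/
lemma isometry_setIntegral (e : EucN N ≃ₗᵢ[ℝ] EucN N) (f : EucN N → ℝ) (ε : ℝ) :
    ∫ z in ball (0 : EucN N) ε, f (e z) = ∫ z in ball (0 : EucN N) ε, f z := by
  have hpre : e ⁻¹' (ball (0 : EucN N) ε) = ball 0 ε := by
    ext z
    simp [mem_ball, dist_zero_right, e.norm_map]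
  have h := e.measurePreserving.setIntegral_preimage_emb
      e.toHomeomorph.measurableEmbedding f (ball (0 : EucN N) ε)
  rwa [hpre] at h

lemma integral_coord_zero (ε : ℝ) (i : Fin N) :
    ∫ z in ball (0 : EucN N) ε, z i = 0 := by
  have h := isometry_setIntegral (LinearIsometryEquiv.neg ℝ (E := EucN N))
      (fun z => z i) ε
  simp only [LinearIsometryEquiv.coe_neg] at h
  have h2 : ∫ z in ball (0 : EucN N) ε, (-z) i = ∫ z in ball (0 : EucN N) ε, -(z i) := by
    congr 1
  rw [h2, integral_neg] at h
  linarith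

lemma integral_coord_offdiag (ε : ℝ) {i j : Fin N} (hij : i ≠ j) :
    ∫ z in ball (0 : EucN N) ε, z i * z j = 0 := by
  set e : EucN N ≃ₗᵢ[ℝ] EucN N :=
    LinearIsometryEquiv.piLpCongrRight 2
      (fun k : Fin N => if k = i then LinearIsometryEquiv.neg ℝ else
        LinearIsometryEquiv.refl ℝ ℝ) with he
  have happ : ∀ (z : EucN N), (e z) i = -(z i) ∧ (e z) j = z j := by
    intro z
    constructor
    · simp [he, LinearIsometryEquiv.piLpCongrRight_apply]
    · simp [he, LinearIsometryEquiv.piLpCongrRight_apply, hij.symm]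
  have h := isometry_setIntegral e (fun z => z i * z j) ε
  have h2 : ∫ z in ball (0 : EucN N) ε, (e z) i * (e z) j
      = ∫ z in ball (0 : EucN N) ε, -(z i * z j) := by
    apply integral_congr_ae; filter_upwards with z
    rw [(happ z).1, (happ z).2]; ring
  rw [h2, integral_neg] at h
  linarith

lemma integral_coord_sq_eq (ε : ℝ) (i j : Fin N) :
    ∫ z in ball (0 : EucN N) ε, (z i)^2 = ∫ z in ball (0 : EucN N) ε, (z j)^2 := by
  set e : EucN N ≃ₗᵢ[ℝ] EucN N :=
    LinearIsometryEquiv.piLpCongrLeft 2 ℝ ℝ (Equiv.swap i j) with he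
  have happ : ∀ (z : EucN N), (e z) i = z j := by
    intro z
    have h1 : (e z) i = z ((Equiv.swap i j).symm i) := by
      simp [he, LinearIsometryEquiv.piLpCongrLeft_apply, Equiv.piCongrLeft'_apply]
    rw [h1, Equiv.symm_swap]
    exact congrArg z (Equiv.swap_apply_left i j)
  have h := isometry_setIntegral e (fun z => (z i)^2) ε
  have h2 : ∫ z in ball (0 : EucN N) ε, ((e z) i)^2
      = ∫ z in ball (0 : EucN N) ε, (z j)^2 := by
    apply integral_congr_ae; filter_upwards with z
    rw [happ z]
  rw [h2] at h
  exact h.symm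

lemma euc_nontrivial (hN : 1 ≤ N) : Nontrivial (EucN N) := by
  haveI : NeZero N := ⟨by omega⟩
  refine ⟨⟨0, EuclideanSpace.single ⟨0, by omega⟩ (1 : ℝ), fun h => ?_⟩⟩
  have := congrArg norm h
  rw [EuclideanSpace.norm_single] at this
  simp at this

lemma integral_normsq (hN : 1 ≤ N) {ε : ℝ} (hε : 0 < ε) :
    ∫ z in ball (0 : EucN N) ε, ‖z‖^2
      = (N : ℝ) * ε^2 / ((N : ℝ) + 2) * (volume (ball (0 : EucN N) ε)).toReal := by
  haveI := euc_nontrivial (N := N) hN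
  set f : ℝ → ℝ := (Iio ε).indicator (fun y => y^2) with hf
  have hdim : Module.finrank ℝ (EucN N) = N := finrank_euclideanSpace_fin
  have h := integral_fun_norm_addHaar (volume : Measure (EucN N)) f
  have h1 : ∫ x : EucN N, f ‖x‖ = ∫ z in ball (0 : EucN N) ε, ‖z‖^2 := by
    rw [← integral_indicator measurableSet_ball]
    congr 1 with z
    by_cases hz : z ∈ ball (0 : EucN N) ε
    · rw [indicator_of_mem hz, hf, indicator_of_mem (by simpa [mem_ball, dist_zero_right] using hz)]
    · rw [indicator_of_notMem hz, hf,
        indicator_of_notMem (by simpa [mem_ball, dist_zero_right] using hz)]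
  have h2 : ∫ y in Ioi (0:ℝ), y ^ (Module.finrank ℝ (EucN N) - 1) • f y
      = ε ^ (N + 2) / ((N : ℝ) + 2) := by
    have hind : ∀ y : ℝ, y ^ (Module.finrank ℝ (EucN N) - 1) • f y
        = (Iio ε).indicator (fun y => y ^ (N - 1) * y ^ 2) y := by
      intro y
      rw [hf, hdim]
      by_cases hy : y ∈ Iio ε
      · rw [indicator_of_mem hy, indicator_of_mem hy, smul_eq_mul]
      · rw [indicator_of_notMem hy, indicator_of_notMem hy, smul_zero]
    simp_rw [hind]
    rw [setIntegral_indicator measurableSet_Iio, Ioi_inter_Iio]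
    have hpow : ∀ y : ℝ, y ^ (N - 1) * y ^ 2 = y ^ (N + 1) := by
      intro y
      rw [← pow_add]
      congr 1
      omega
    simp_rw [hpow]
    rw [← integral_Ioc_eq_integral_Ioo, ← intervalIntegral.integral_of_le hε.le,
      integral_pow]
    push_cast
    ring_nf
  rw [h1, h2] at h
  have h3 : (volume (ball (0 : EucN N) ε)).toReal
      = ε ^ N * (volume (ball (0 : EucN N) 1)).toReal := by
    rw [Measure.addHaar_ball _ _ hε.le, ENNReal.toReal_mul, hdim,
      ENNReal.toReal_ofReal (by positivity)]
  rw [h, h3, hdim]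
  have hN2 : ((N : ℝ) + 2) ≠ 0 := by positivity
  rw [nsmul_eq_mul, smul_eq_mul]
  field_simp
  simp only [measureReal_def]
  ring

lemma integral_coord_sq (hN : 1 ≤ N) {ε : ℝ} (hε : 0 < ε) (i : Fin N) :
    ∫ z in ball (0 : EucN N) ε, (z i)^2
      = ε^2 / ((N : ℝ) + 2) * (volume (ball (0 : EucN N) ε)).toReal := by
  have hsum : ∑ j : Fin N, ∫ z in ball (0 : EucN N) ε, (z j)^2
      = ∫ z in ball (0 : EucN N) ε, ‖z‖^2 := by
    rw [← integral_finset_sum]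
    · apply integral_congr_ae; filter_upwards with z
      rw [EuclideanSpace.norm_eq,
        Real.sq_sqrt (Finset.sum_nonneg fun _ _ => sq_nonneg _)]
      simp [Real.norm_eq_abs, sq_abs]
    · intro j _
      exact integrableOn_ball_of_continuous (((coord_continuous j)).pow 2) ε
  have hall : ∀ j : Fin N, (∫ z in ball (0 : EucN N) ε, (z j)^2)
      = ∫ z in ball (0 : EucN N) ε, (z i)^2 := fun j => integral_coord_sq_eq ε j i
  rw [Finset.sum_congr rfl (fun j _ => hall j), Finset.sum_const, Finset.card_univ,
    Fintype.card_fin, integral_normsq hN hε] at hsum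
  have hNpos : (0 : ℝ) < N := by exact_mod_cast Nat.lt_of_lt_of_le Nat.zero_lt_one hN
  rw [nsmul_eq_mul] at hsum
  refine mul_left_cancel₀ hNpos.ne' ?_
  rw [hsum]; ring

/-- The ball average of a quadratic polynomial. -/
lemma avg_quad (hN : 1 ≤ N) {ε : ℝ} (hε : 0 < ε)
    (A : Matrix (Fin N) (Fin N) ℝ) (b : Fin N → ℝ) (c : ℝ)
    (φ : EucN N → ℝ)
    (hφ : ∀ y : EucN N,
      φ y = c + (∑ i, b i * y i) + (1 / 2) * ∑ i, ∑ j, y i * A i j * y j)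
    (x : EucN N) :
    ⨍ y in ball x ε, φ y = φ x + ε^2 / (2 * ((N : ℝ) + 2)) * Matrix.trace A := by
  haveI := euc_nontrivial (N := N) hN
  set B := (volume (ball (0 : EucN N) ε)).toReal with hB
  have hBball : volume (ball x ε) = volume (ball (0 : EucN N) ε) :=
    Measure.addHaar_ball_center volume x ε
  have hBpos : 0 < B := ENNReal.toReal_pos (measure_ball_pos volume 0 hε).ne'
    measure_ball_lt_top.ne
  -- translation
  have key : ∫ y in ball x ε, φ y = ∫ z in ball (0 : EucN N) ε, φ (x + z) := by
    have hpre : ((x + ·) ⁻¹' ball x ε) = ball (0 : EucN N) ε := by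
      ext z
      simp [mem_ball, dist_eq_norm, add_sub_cancel_left, dist_zero_right]
    have h := (measurePreserving_add_left (volume : Measure (EucN N)) x).setIntegral_preimage_emb
        (Homeomorph.addLeft x).measurableEmbedding φ (ball x ε)
    rw [hpre] at h
    exact h.symm
  -- decomposition
  set d : Fin N → ℝ :=
    fun i => b i + (1/2) * ((∑ j, x j * A j i) + (∑ j, A i j * x j)) with hd
  have hdec : ∀ z : EucN N, φ (x + z)
      = φ x + ((∑ i, d i * z i) + (1/2) * ∑ i, ∑ j, z i * A i j * z j) := by
    intro z
    have hxz : ∀ i, (x + z) i = x i + z i := fun i => rfl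
    rw [hφ, hφ]
    simp only [hxz]
    have e1 : ∑ i, ∑ j, (x i + z i) * A i j * (x j + z j)
        = (∑ i, ∑ j, x i * A i j * x j) + ((∑ i, ∑ j, x i * A i j * z j)
          + ((∑ i, ∑ j, z i * A i j * x j) + (∑ i, ∑ j, z i * A i j * z j))) := by
      have hterm : ∀ i j, (x i + z i) * A i j * (x j + z j)
          = x i * A i j * x j + (x i * A i j * z j
            + (z i * A i j * x j + z i * A i j * z j)) := fun i j => by ring
      simp_rw [hterm, Finset.sum_add_distrib]
    have e2 : ∑ i, b i * (x i + z i) = (∑ i, b i * x i) + ∑ i, b i * z i := by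
      simp_rw [mul_add, Finset.sum_add_distrib]
    have e3 : ∑ i, ∑ j, x i * A i j * z j = ∑ i, (∑ j, x j * A j i) * z i := by
      rw [Finset.sum_comm]
      refine Finset.sum_congr rfl fun j _ => ?_
      rw [Finset.sum_mul]
    have e4 : ∑ i, ∑ j, z i * A i j * x j = ∑ i, (∑ j, A i j * x j) * z i := by
      refine Finset.sum_congr rfl fun i _ => ?_
      rw [Finset.sum_mul]
      exact Finset.sum_congr rfl fun j _ => by ring
    have e5 : ∑ i, d i * z i = (∑ i, b i * z i)
        + (1/2) * ((∑ i, (∑ j, x j * A j i) * z i) + (∑ i, (∑ j, A i j * x j) * z i)) := by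
      have hterm : ∀ i : Fin N, d i * z i
          = b i * z i + (1/2) * ((∑ j, x j * A j i) * z i + (∑ j, A i j * x j) * z i) := by
        intro i; rw [hd]; ring
      simp_rw [hterm, Finset.sum_add_distrib, ← Finset.mul_sum]
      rw [Finset.sum_add_distrib]
    rw [e1, e2, e5, ← e3, ← e4]
    ring
  -- integrability
  have hIcoord : ∀ i, IntegrableOn (fun z : EucN N => z i) (ball (0 : EucN N) ε) volume :=
    fun i => integrableOn_ball_of_continuous (coord_continuous i) ε
  have hIquad : ∀ i j, IntegrableOn (fun z : EucN N => z i * A i j * z j)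
      (ball (0 : EucN N) ε) volume := fun i j =>
    integrableOn_ball_of_continuous
      (((coord_continuous i).mul continuous_const).mul (coord_continuous j)) ε
  have hIlin : IntegrableOn (fun z : EucN N => ∑ i, d i * z i)
      (ball (0 : EucN N) ε) volume :=
    integrableOn_ball_of_continuous
      (continuous_finset_sum _ fun i _ => continuous_const.mul (coord_continuous i)) ε
  have hIq : IntegrableOn (fun z : EucN N => (1/2) * ∑ i, ∑ j, z i * A i j * z j)
      (ball (0 : EucN N) ε) volume :=
    integrableOn_ball_of_continuous
      (continuous_const.mul (continuous_finset_sum _ fun i _ =>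
        continuous_finset_sum _ fun j _ =>
          ((coord_continuous i).mul continuous_const).mul (coord_continuous j))) ε
  -- compute the integral
  have hint : ∫ z in ball (0 : EucN N) ε, φ (x + z)
      = φ x * B + (ε^2 / ((N : ℝ) + 2) * B * ((1:ℝ)/2) * Matrix.trace A) := by
    calc ∫ z in ball (0 : EucN N) ε, φ (x + z)
        = ∫ z in ball (0 : EucN N) ε,
            (φ x + ((∑ i, d i * z i) + (1/2) * ∑ i, ∑ j, z i * A i j * z j)) := by
          apply integral_congr_ae; filter_upwards with z; exact hdec z
      _ = (∫ _ in ball (0 : EucN N) ε, φ x)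
          + ((∫ z in ball (0 : EucN N) ε, ∑ i, d i * z i)
            + ∫ z in ball (0 : EucN N) ε, (1/2) * ∑ i, ∑ j, z i * A i j * z j) := by
          have hIsum : IntegrableOn (fun z : EucN N =>
              (∑ i, d i * z i) + (1/2) * ∑ i, ∑ j, z i * A i j * z j)
              (ball (0 : EucN N) ε) volume := hIlin.add hIq
          rw [integral_add (integrableOn_const measure_ball_lt_top.ne :
              IntegrableOn (fun _ : EucN N => φ x) (ball (0 : EucN N) ε) volume) hIsum,
            integral_add hIlin hIq]
      _ = φ x * B + (0 + (ε^2 / ((N : ℝ) + 2) * B * ((1:ℝ)/2) * Matrix.trace A)) := by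
          congr 1
          · rw [setIntegral_const, smul_eq_mul, mul_comm, hB, measureReal_def]
          congr 1
          · rw [integral_finset_sum _ (fun i _ => (hIcoord i).const_mul (d i))]
            simp_rw [integral_const_mul, integral_coord_zero]
            simp
          · rw [integral_const_mul,
              integral_finset_sum _ (fun i _ => integrable_finset_sum _ fun j _ => hIquad i j)]
            have hin : ∀ i : Fin N,
                (∫ z in ball (0 : EucN N) ε, ∑ j, z i * A i j * z j)
                = A i i * (ε^2 / ((N : ℝ) + 2) * B) := by
              intro i
              rw [integral_finset_sum _ (fun j _ => hIquad i j), Finset.sum_eq_single i]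
              · have : (fun z : EucN N => z i * A i i * z i)
                    = fun z : EucN N => A i i * (z i)^2 := by
                  funext z; ring
                rw [this, integral_const_mul, integral_coord_sq hN hε]
              · intro j _ hji
                have : (fun z : EucN N => z i * A i j * z j)
                    = fun z : EucN N => A i j * (z i * z j) := by
                  funext z; ring
                rw [this, integral_const_mul, integral_coord_offdiag ε (Ne.symm hji), mul_zero]
              · intro h; exact absurd (Finset.mem_univ i) h
            simp_rw [hin]
            rw [← Finset.sum_mul, Matrix.trace]
            simp [Matrix.diag]
            ring
      _ = φ x * B + (ε^2 / ((N : ℝ) + 2) * B * ((1:ℝ)/2) * Matrix.trace A) := by ring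
  rw [setAverage_eq, measureReal_def, hBball, ← hB, key, hint, smul_eq_mul]
  have hN2 : ((N : ℝ) + 2) ≠ 0 := by positivity
  field_simp

/-- The symmetric two-point average of a quadratic polynomial. -/
lemma dir_quad (ε : ℝ)
    (A : Matrix (Fin N) (Fin N) ℝ) (b : Fin N → ℝ) (c : ℝ)
    (φ : EucN N → ℝ)
    (hφ : ∀ y : EucN N,
      φ y = c + (∑ i, b i * y i) + (1 / 2) * ∑ i, ∑ j, y i * A i j * y j)
    (x ξ : EucN N) :
    (φ (x + ε • ξ) + φ (x - ε • ξ)) / 2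
      = φ x + ε^2 / 2 * ∑ i, ∑ j, ξ i * A i j * ξ j := by
  have h1 : ∀ i, (x + ε • ξ) i = x i + ε * ξ i := fun i => rfl
  have h2 : ∀ i, (x - ε • ξ) i = x i - ε * ξ i := fun i => rfl
  rw [hφ, hφ, hφ]
  simp only [h1, h2]
  have e1 : (∑ i, ∑ j, (x i + ε * ξ i) * A i j * (x j + ε * ξ j))
      + (∑ i, ∑ j, (x i - ε * ξ i) * A i j * (x j - ε * ξ j))
      = 2 * (∑ i, ∑ j, x i * A i j * x j) + 2 * (ε^2 * ∑ i, ∑ j, ξ i * A i j * ξ j) := by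
    have hterm : ∀ i j, (x i + ε * ξ i) * A i j * (x j + ε * ξ j)
        + (x i - ε * ξ i) * A i j * (x j - ε * ξ j)
        = 2 * (x i * A i j * x j) + 2 * (ε^2 * (ξ i * A i j * ξ j)) := fun i j => by ring
    calc (∑ i, ∑ j, (x i + ε * ξ i) * A i j * (x j + ε * ξ j))
        + (∑ i, ∑ j, (x i - ε * ξ i) * A i j * (x j - ε * ξ j))
        = ∑ i, ∑ j, (2 * (x i * A i j * x j) + 2 * (ε^2 * (ξ i * A i j * ξ j))) := by
          rw [← Finset.sum_add_distrib]
          refine Finset.sum_congr rfl fun i _ => ?_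
          rw [← Finset.sum_add_distrib]
          exact Finset.sum_congr rfl fun j _ => hterm i j
      _ = 2 * (∑ i, ∑ j, x i * A i j * x j) + 2 * (ε^2 * ∑ i, ∑ j, ξ i * A i j * ξ j) := by
          simp_rw [Finset.sum_add_distrib, ← Finset.mul_sum]
  have e2 : (∑ i, b i * (x i + ε * ξ i)) + (∑ i, b i * (x i - ε * ξ i))
      = 2 * ∑ i, b i * x i := by
    have hterm : ∀ i : Fin N, b i * (x i + ε * ξ i) + b i * (x i - ε * ξ i)
        = 2 * (b i * x i) := fun i => by ring
    rw [← Finset.sum_add_distrib, Finset.sum_congr rfl fun i _ => hterm i, ← Finset.mul_sum]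
  linarith [e1, e2]

/-- Coordinates of a unit vector are bounded by 1. -/
lemma coord_le_one {ξ : EucN N} (hξ : ‖ξ‖ = 1) (i : Fin N) : |ξ i| ≤ 1 := by
  have hsq : (ξ i)^2 ≤ ∑ j, (ξ j)^2 :=
    Finset.single_le_sum (f := fun j => (ξ j)^2) (fun _ _ => sq_nonneg _) (Finset.mem_univ i)
  have hnorm : ∑ j, (ξ j)^2 = 1 := by
    have h := hξ
    rw [EuclideanSpace.norm_eq] at h
    have h2 : Real.sqrt (∑ j, ‖ξ j‖^2) ^ 2 = 1 := by rw [h]; norm_num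
    rw [Real.sq_sqrt (Finset.sum_nonneg fun _ _ => sq_nonneg _)] at h2
    simpa [Real.norm_eq_abs, sq_abs] using h2
  rw [hnorm] at hsq
  exact (sq_le_one_iff_abs_le_one _).1 hsq

/-- for a quadratic polynomial `φ(y) = c + bᵀy + ½ yᵀAy` (`A` symmetric),
`2(N+p) (M^ε φ(x) - φ(x)) = ε² (tr A + (p-2) λ_max(A)) = ε² D_p φ`. -/
theorem quadratic_identity (hN : 2 ≤ N) (p q ε : ℝ) (hp : 2 ≤ p)
    (hq : q = ((N : ℝ) + 2) / ((N : ℝ) + p)) (hε : 0 < ε)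
    (A : Matrix (Fin N) (Fin N) ℝ) (hA : A.IsSymm) (b : Fin N → ℝ) (c : ℝ)
    (φ : EucN N → ℝ)
    (hφ : ∀ y : EucN N,
      φ y = c + (∑ i, b i * y i) + (1 / 2) * ∑ i, ∑ j, y i * A i j * y j)
    (x : EucN N) :
    2 * ((N : ℝ) + p) * (mvOp q ε φ x - φ x)
      = ε ^ 2 * (Matrix.trace A + (p - 2) * lamMax A) := by
  haveI : NeZero N := ⟨by omega⟩
  haveI : Nonempty (sphere (0 : EucN N) 1) :=
    ⟨⟨EuclideanSpace.single ⟨0, by omega⟩ (1 : ℝ), by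
      rw [mem_sphere_zero_iff_norm, EuclideanSpace.norm_single]; simp⟩⟩
  have hN1 : 1 ≤ N := by omega
  have hNR : (2 : ℝ) ≤ (N : ℝ) := by exact_mod_cast hN
  have hNp : (0 : ℝ) < (N : ℝ) + p := by linarith
  have hN2 : (0 : ℝ) < (N : ℝ) + 2 := by linarith
  -- setup
  set Q : sphere (0 : EucN N) 1 → ℝ :=
    fun ξ => ∑ i, ∑ j, (ξ : EucN N) i * A i j * (ξ : EucN N) j with hQ
  set K : ℝ := φ x + q * (ε^2 / (2 * ((N : ℝ) + 2)) * Matrix.trace A) with hK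
  set cc : ℝ := (1 - q) * (ε^2 / 2) with hcc
  have hq1 : q ≤ 1 := by
    rw [hq, div_le_one hNp]; linarith
  have hccnn : 0 ≤ cc := by
    rw [hcc]; have : (0:ℝ) ≤ 1 - q := by linarith
    positivity
  -- value of mveOp
  have hmve : ∀ ξ : sphere (0 : EucN N) 1, mveOp q ε φ (ξ : EucN N) x = K + cc * Q ξ := by
    intro ξ
    have hξ : ‖(ξ : EucN N)‖ = 1 := by
      have := ξ.2; rwa [mem_sphere_zero_iff_norm] at this
    rw [mveOp, avg_quad hN1 hε A b c φ hφ x, dir_quad ε A b c φ hφ x ξ, hK, hcc, hQ]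
    ring
  -- boundedness of Q
  have hbdd : BddAbove (range Q) := by
    refine ⟨∑ i, ∑ j, |A i j|, ?_⟩
    rintro _ ⟨ξ, rfl⟩
    have hξ : ‖(ξ : EucN N)‖ = 1 := by
      have := ξ.2; rwa [mem_sphere_zero_iff_norm] at this
    rw [hQ]
    refine Finset.sum_le_sum fun i _ => Finset.sum_le_sum fun j _ => ?_
    calc (ξ : EucN N) i * A i j * (ξ : EucN N) j
        ≤ |(ξ : EucN N) i * A i j * (ξ : EucN N) j| := le_abs_self _
      _ = |(ξ : EucN N) i| * |A i j| * |(ξ : EucN N) j| := by rw [abs_mul, abs_mul]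
      _ ≤ 1 * |A i j| * 1 :=
          mul_le_mul (mul_le_mul_of_nonneg_right (coord_le_one hξ i) (abs_nonneg _))
            (coord_le_one hξ j) (abs_nonneg _) (by positivity)
      _ = |A i j| := by ring
  -- the supremum
  have hsup : mvOp q ε φ x = K + cc * lamMax A := by
    rw [mvOp, lamMax]
    have hcongr : (⨆ ξ : sphere (0 : EucN N) 1, mveOp q ε φ (ξ : EucN N) x)
        = ⨆ ξ : sphere (0 : EucN N) 1, (K + cc * Q ξ) :=
      congrArg iSup (funext hmve)
    have hmono : Monotone (fun t : ℝ => K + cc * t) := fun a b hab => by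
      dsimp; nlinarith
    have hct : ContinuousAt (fun t : ℝ => K + cc * t) (⨆ ξ, Q ξ) :=
      (continuous_const.add (continuous_const.mul continuous_id)).continuousAt
    have h := Monotone.map_ciSup_of_continuousAt hct hmono hbdd
    rw [hcongr, ← h]
  rw [hsup, hK, hq]
  have hNp' : ((N : ℝ) + p) ≠ 0 := hNp.ne'
  have hN2' : ((N : ℝ) + 2) ≠ 0 := hN2.ne'
  rw [hcc, hq]
  field_simp
  ring

end
end

section
/- If v : Ω_ε → ℝ is bounded and lower semicontinuous on Ω_ε, then M^ε v is bounded and lower semicontinuous on closure(Ω). -/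
open MeasureTheory Metric Set
open scoped ENNReal NNReal Classical

open Filter
open scoped Topology

noncomputable section

variable {N : ℕ}

/-- `Ω_ε = {x : dist(x,Ω) ≤ ε}`. -/
def Oeps (Ω : Set (EucN N)) (ε : ℝ) : Set (EucN N) := {x | Metric.infDist x Ω ≤ ε}

/-- A function that is lower semicontinuous on an open set, extended by `0` outside,
is measurable. -/
lemma measurable_indicator_of_lsc {α : Type*} [TopologicalSpace α] [MeasurableSpace α]
    [OpensMeasurableSpace α] {U : Set α} (hU : IsOpen U) {v : α → ℝ}
    (hv : ∀ x ∈ U, LowerSemicontinuousWithinAt v U x) : Measurable (U.indicator v) := by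
  apply measurable_of_Ioi
  intro a
  have hopen : IsOpen {y | y ∈ U ∧ a < v y} := by
    rw [isOpen_iff_mem_nhds]
    intro y hy
    have h1 : U ∈ 𝓝 y := hU.mem_nhds hy.1
    have h2 := hv y hy.1 a hy.2
    rw [nhdsWithin_eq_nhds.2 h1] at h2
    filter_upwards [h1, h2] with z hz1 hz2
    exact ⟨hz1, hz2⟩
  rcases lt_or_ge a 0 with ha | ha
  · have : (U.indicator v) ⁻¹' Ioi a = {y | y ∈ U ∧ a < v y} ∪ Uᶜ := by
      ext y
      by_cases hy : y ∈ U <;> simp [indicator_apply, hy, ha]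
    rw [this]
    exact hopen.measurableSet.union hU.measurableSet.compl
  · have : (U.indicator v) ⁻¹' Ioi a = {y | y ∈ U ∧ a < v y} := by
      ext y
      by_cases hy : y ∈ U <;> simp [indicator_apply, hy, ha.not_gt]
    rw [this]
    exact hopen.measurableSet

/-- Transfer lower semicontinuity within a set along a function agreeing on the set. -/
lemma lscwa_congr {α : Type*} [TopologicalSpace α] {f g : α → ℝ} {s : Set α} {x : α}
    (hf : LowerSemicontinuousWithinAt f s x) (h : Set.EqOn f g s) (hx : x ∈ s) :
    LowerSemicontinuousWithinAt g s x := by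
  intro t ht
  rw [← h hx] at ht
  filter_upwards [hf t ht, eventually_mem_nhdsWithin] with z h1 h2
  rwa [← h h2]

/-- Multiplication by a nonnegative constant preserves lower semicontinuity. -/
lemma lscwa_const_mul {α : Type*} [TopologicalSpace α] {f : α → ℝ} {s : Set α} {x : α} {c : ℝ}
    (hc : 0 ≤ c) (hf : LowerSemicontinuousWithinAt f s x) :
    LowerSemicontinuousWithinAt (fun y => c * f y) s x := by
  rcases hc.eq_or_lt with rfl | hc
  · intro t ht
    simp only [zero_mul] at ht ⊢
    exact Eventually.of_forall fun _ => ht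
  · intro t ht
    have h1 : t / c < f x := by
      rw [div_lt_iff₀ hc, mul_comm]
      exact ht
    filter_upwards [hf (t / c) h1] with z hz
    have := (div_lt_iff₀ hc).1 hz
    linarith

/-- Boundedness of a bounded measurable function on balls gives integrability. -/
lemma integrableOn_ball_of_bounded {w : EucN N → ℝ} {C : ℝ} (hw : Measurable w)
    (hb : ∀ y, |w y| ≤ C) (z : EucN N) (r : ℝ) : IntegrableOn w (ball z r) := by
  refine Integrable.mono' (g := fun _ => C) (integrableOn_const measure_ball_lt_top.ne)
    hw.aestronglyMeasurable.restrict (ae_of_all _ fun y => by simpa using hb y)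

/-- The integral of a bounded measurable function over a moving ball depends continuously
on the center. -/
lemma cont_ball_integral (hN : 2 ≤ N) {ε : ℝ} (hε : 0 < ε) {w : EucN N → ℝ} {C : ℝ}
    (hw : Measurable w) (hb : ∀ y, |w y| ≤ C) :
    Continuous fun x : EucN N => ∫ y in ball x ε, w y := by
  haveI : Nonempty (Fin N) := ⟨⟨0, by omega⟩⟩
  have hC : 0 ≤ C := le_trans (abs_nonneg _) (hb 0)
  set c : ℝ := (volume (ball (0 : EucN N) 1)).toReal with hc
  have hvol : ∀ (x : EucN N) {r : ℝ}, 0 ≤ r →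
      (volume (ball x r)).toReal = r ^ N * c := by
    intro x r hr
    rw [Measure.addHaar_ball _ x hr, finrank_euclideanSpace_fin, ENNReal.toReal_mul,
      ENNReal.toReal_ofReal (pow_nonneg hr _)]
  rw [continuous_iff_continuousAt]
  intro x
  rw [ContinuousAt, tendsto_iff_dist_tendsto_zero]
  have key : ∀ x' : EucN N, dist x' x < ε →
      dist (∫ y in ball x' ε, w y) (∫ y in ball x ε, w y)
        ≤ 2 * C * (((ε + dist x' x) ^ N - (ε - dist x' x) ^ N) * c) := by
    intro x' hd
    set d := dist x' x with hdd
    have hd0 : 0 ≤ d := dist_nonneg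
    set D : Set (EucN N) := ball x (ε + d) \ ball x (ε - d) with hD
    have hDineq : ∀ y : EucN N, |(ball x' ε).indicator w y - (ball x ε).indicator w y|
        ≤ D.indicator (fun _ => 2 * C) y := by
      intro y
      by_cases h1 : y ∈ ball x' ε <;> by_cases h2 : y ∈ ball x ε
      · simp only [indicator_of_mem, h1, h2, sub_self, abs_zero]
        exact indicator_nonneg (fun _ _ => by linarith) y
      · have hyD : y ∈ D := by
          constructor
          · rw [mem_ball] at h1 ⊢
            calc dist y x ≤ dist y x' + dist x' x := dist_triangle _ _ _
              _ < ε + d := by rw [hdd]; linarith [h1]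
          · rw [mem_ball] at h2
            intro hlt
            rw [mem_ball] at hlt
            exact h2 (by linarith)
        simp only [indicator_of_mem h1, indicator_of_notMem h2, indicator_of_mem hyD, sub_zero]
        linarith [hb y, abs_nonneg (w y)]
      · have hyD : y ∈ D := by
          constructor
          · rw [mem_ball] at h2 ⊢; linarith
          · intro hlt
            rw [mem_ball] at h1 hlt h2
            have := dist_triangle y x' x
            have h1' : ε ≤ dist y x' := not_lt.1 h1
            have h3 : dist y x' ≤ dist y x + d := by
              calc dist y x' ≤ dist y x + dist x x' := dist_triangle _ _ _
                _ = dist y x + d := by rw [dist_comm x x']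
            linarith
        simp only [indicator_of_notMem h1, indicator_of_mem h2, indicator_of_mem hyD, zero_sub,
          abs_neg]
        linarith [hb y]
      · simp only [indicator_of_notMem h1, indicator_of_notMem h2, sub_self, abs_zero]
        exact indicator_nonneg (fun _ _ => by linarith) y
    have hi1 : Integrable ((ball x' ε).indicator w) :=
      (integrableOn_ball_of_bounded hw hb x' ε).integrable_indicator measurableSet_ball
    have hi2 : Integrable ((ball x ε).indicator w) :=
      (integrableOn_ball_of_bounded hw hb x ε).integrable_indicator measurableSet_ball
    have hiD : Integrable (D.indicator fun _ : EucN N => 2 * C) := by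
      refine (integrableOn_const ?_).integrable_indicator
        (measurableSet_ball.diff measurableSet_ball)
      exact (lt_of_le_of_lt (measure_mono diff_subset) measure_ball_lt_top).ne
    have step1 : dist (∫ y in ball x' ε, w y) (∫ y in ball x ε, w y)
        ≤ ∫ y, D.indicator (fun _ => 2 * C) y := by
      rw [← integral_indicator measurableSet_ball, ← integral_indicator measurableSet_ball,
        dist_eq_norm, ← integral_sub hi1 hi2]
      calc ‖∫ y, ((ball x' ε).indicator w y - (ball x ε).indicator w y)‖
          ≤ ∫ y, ‖(ball x' ε).indicator w y - (ball x ε).indicator w y‖ :=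
            norm_integral_le_integral_norm _
        _ ≤ ∫ y, D.indicator (fun _ => 2 * C) y := by
            refine integral_mono ((hi1.sub hi2).norm) hiD ?_
            intro y
            simpa using hDineq y
    have step2 : ∫ y, D.indicator (fun _ : EucN N => 2 * C) y
        = 2 * C * (((ε + d) ^ N - (ε - d) ^ N) * c) := by
      rw [integral_indicator (measurableSet_ball.diff measurableSet_ball), setIntegral_const,
        smul_eq_mul]
      have hsub : ball x (ε - d) ⊆ ball x (ε + d) := ball_subset_ball (by linarith)
      have hmd : volume D = volume (ball x (ε + d)) - volume (ball x (ε - d)) :=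
        measure_diff hsub measurableSet_ball.nullMeasurableSet measure_ball_lt_top.ne
      rw [measureReal_def, ← hD, hmd, ENNReal.toReal_sub_of_le (measure_mono hsub) measure_ball_lt_top.ne,
        hvol x (by linarith : (0:ℝ) ≤ ε + d), hvol x (by linarith : (0:ℝ) ≤ ε - d)]
      ring
    rw [← step2]; exact step1
  have hg : Tendsto (fun x' : EucN N =>
      2 * C * (((ε + dist x' x) ^ N - (ε - dist x' x) ^ N) * c)) (𝓝 x) (𝓝 0) := by
    have hcont : Continuous fun x' : EucN N =>
        2 * C * (((ε + dist x' x) ^ N - (ε - dist x' x) ^ N) * c) := by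
      fun_prop
    have := hcont.tendsto x
    simpa using this
  refine squeeze_zero' ?_ ?_ hg
  · exact Eventually.of_forall fun _ => dist_nonneg
  · filter_upwards [ball_mem_nhds x hε] with x' hx'
    exact key x' (mem_ball.1 hx')

/-- if `v` is bounded and lower semicontinuous on `Ω_ε`, then `M^ε v` is
bounded and lower semicontinuous on `closure Ω`. -/
theorem mvOp_lowerSemicontinuous (hN : 2 ≤ N) (p q ε : ℝ) (hp : 2 ≤ p)
    (hq : q = ((N : ℝ) + 2) / ((N : ℝ) + p)) (hε : 0 < ε)
    (Ω : Set (EucN N)) (hΩo : IsOpen Ω) (hΩb : Bornology.IsBounded Ω)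
    (v : EucN N → ℝ) (hvb : ∃ C, ∀ x ∈ Oeps Ω ε, |v x| ≤ C)
    (hvlsc : LowerSemicontinuousOn v (Oeps Ω ε)) :
    (∃ C, ∀ x ∈ closure Ω, |mvOp q ε v x| ≤ C) ∧
      LowerSemicontinuousOn (mvOp q ε v) (closure Ω) := by
  haveI : Nonempty (Fin N) := ⟨⟨0, by omega⟩⟩
  haveI hsne : Nonempty ↥(sphere (0 : EucN N) 1) :=
    (NormedSpace.sphere_nonempty.mpr zero_le_one).to_subtype
  obtain ⟨C₀, hC₀⟩ := hvb
  set C := max C₀ 0 with hCdef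
  have hCpos : 0 ≤ C := le_max_right _ _
  have hvC : ∀ x ∈ Oeps Ω ε, |v x| ≤ C := fun x hx => (hC₀ x hx).trans (le_max_left _ _)
  have hNp : (0:ℝ) < (N:ℝ) + p := by
    have : (0:ℝ) ≤ (N:ℝ) := Nat.cast_nonneg N
    linarith
  have hq0 : 0 ≤ q := by
    rw [hq]
    have : (0:ℝ) ≤ (N:ℝ) := Nat.cast_nonneg N
    positivity
  have hq1 : q ≤ 1 := by
    rw [hq, div_le_one hNp]
    linarith
  -- the open set on which `v` is genuinely lower semicontinuous
  set U : Set (EucN N) := {x | infDist x Ω < ε} with hUdef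
  have hUo : IsOpen U := isOpen_lt (continuous_infDist_pt Ω) continuous_const
  have hUsub : U ⊆ Oeps Ω ε := fun x hx => show infDist x Ω ≤ ε from le_of_lt hx
  set w : EucN N → ℝ := U.indicator v with hwdef
  have hwm : Measurable w :=
    measurable_indicator_of_lsc hUo fun x hx => (hvlsc x (hUsub hx)).mono hUsub
  have hwb : ∀ y, |w y| ≤ C := by
    intro y
    by_cases hy : y ∈ U
    · rw [hwdef, indicator_of_mem hy]; exact hvC y (hUsub hy)
    · rw [hwdef, indicator_of_notMem hy]; simpa using hCpos
  have hF : Continuous fun x : EucN N => ∫ y in ball x ε, w y :=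
    cont_ball_integral hN hε hwm hwb
  have hball : ∀ x ∈ closure Ω, ball x ε ⊆ U := by
    intro x hx y hy
    have h1 : infDist y Ω ≤ infDist x Ω + dist y x := infDist_le_infDist_add_dist
    rw [infDist_zero_of_mem_closure hx] at h1
    have h2 : dist y x < ε := mem_ball.1 hy
    simp only [hUdef, mem_setOf_eq]
    linarith
  have hmem : ∀ a : EucN N, ‖a‖ ≤ ε → ∀ z ∈ closure Ω, z + a ∈ Oeps Ω ε := by
    intro a ha z hz
    have h1 : infDist (z + a) Ω ≤ infDist z Ω + dist (z + a) z := infDist_le_infDist_add_dist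
    rw [infDist_zero_of_mem_closure hz, dist_eq_norm, add_sub_cancel_left] at h1
    simp only [Oeps, mem_setOf_eq]
    linarith
  have htrans : ∀ a : EucN N, ‖a‖ ≤ ε → ∀ x ∈ closure Ω,
      LowerSemicontinuousWithinAt (fun z => v (z + a)) (closure Ω) x := by
    intro a ha x hx t ht
    have h2 := hvlsc (x + a) (hmem a ha x hx) t ht
    have htend : Tendsto (fun z : EucN N => z + a) (𝓝[closure Ω] x) (𝓝[Oeps Ω ε] (x + a)) := by
      apply tendsto_nhdsWithin_of_tendsto_nhds_of_eventually_within
      · exact ((continuous_id.add continuous_const).tendsto x).mono_left nhdsWithin_le_nhds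
      · filter_upwards [eventually_mem_nhdsWithin] with z hz using hmem a ha z hz
    exact htend.eventually h2
  set c₀ : ℝ := ((volume (ball (0 : EucN N) ε)).toReal)⁻¹ with hc₀def
  have havg : ∀ x ∈ closure Ω, (⨍ y in ball x ε, v y) = c₀ * ∫ y in ball x ε, w y := by
    intro x hx
    rw [setAverage_eq, smul_eq_mul]
    congr 1
    · rw [hc₀def, measureReal_def, Measure.addHaar_ball_center]
    · exact setIntegral_congr_fun measurableSet_ball fun y hy =>
        (indicator_of_mem (hball x hx hy) v).symm
  have havgb : ∀ x ∈ closure Ω, |⨍ y in ball x ε, v y| ≤ C := by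
    intro x hx
    have hμpos : 0 < (volume (ball x ε)).toReal :=
      ENNReal.toReal_pos (measure_ball_pos _ _ hε).ne' measure_ball_lt_top.ne
    have h1 : |∫ y in ball x ε, v y| ≤ C * (volume (ball x ε)).toReal := by
      have := norm_setIntegral_le_of_norm_le_const (μ := volume) (s := ball x ε) (f := v)
        (C := C) measure_ball_lt_top fun y hy => by
          simpa [Real.norm_eq_abs] using hvC y (hUsub (hball x hx hy))
      simpa [Real.norm_eq_abs, measureReal_def] using this
    rw [setAverage_eq, smul_eq_mul, measureReal_def, abs_mul, abs_of_nonneg (inv_nonneg.2 hμpos.le)]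
    calc ((volume (ball x ε)).toReal)⁻¹ * |∫ y in ball x ε, v y|
        ≤ ((volume (ball x ε)).toReal)⁻¹ * (C * (volume (ball x ε)).toReal) := by
          gcongr
      _ = C := by field_simp
  have hmveb : ∀ x ∈ closure Ω, ∀ ξ : sphere (0 : EucN N) 1, |mveOp q ε v (ξ : EucN N) x| ≤ C := by
    intro x hx ξ
    have hξ : ‖(ξ : EucN N)‖ = 1 := mem_sphere_zero_iff_norm.1 ξ.2
    have hna : ‖ε • (ξ : EucN N)‖ ≤ ε := by
      rw [norm_smul, hξ, Real.norm_eq_abs, abs_of_pos hε, mul_one]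
    have hna' : ‖-(ε • (ξ : EucN N))‖ ≤ ε := by rwa [norm_neg]
    have h1 : |v (x + ε • (ξ : EucN N))| ≤ C := hvC _ (hmem _ hna x hx)
    have h2 : |v (x - ε • (ξ : EucN N))| ≤ C := by
      have := hvC _ (hmem _ hna' x hx)
      simpa [sub_eq_add_neg] using this
    have h3 := havgb x hx
    simp only [mveOp]
    have e1 : |q * (⨍ y in ball x ε, v y)| ≤ q * C := by
      rw [abs_mul, abs_of_nonneg hq0]
      exact mul_le_mul_of_nonneg_left h3 hq0
    have e2 : |(1 - q) * ((v (x + ε • (ξ : EucN N)) + v (x - ε • (ξ : EucN N))) / 2)|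
        ≤ (1 - q) * C := by
      rw [abs_mul, abs_of_nonneg (by linarith : (0:ℝ) ≤ 1 - q)]
      have : |(v (x + ε • (ξ : EucN N)) + v (x - ε • (ξ : EucN N))) / 2| ≤ C := by
        rw [abs_div]
        have := abs_add_le (v (x + ε • (ξ : EucN N))) (v (x - ε • (ξ : EucN N)))
        rw [abs_of_pos (by norm_num : (0:ℝ) < 2)]
        linarith
      exact mul_le_mul_of_nonneg_left this (by linarith)
    calc |q * (⨍ y in ball x ε, v y)
          + (1 - q) * ((v (x + ε • (ξ : EucN N)) + v (x - ε • (ξ : EucN N))) / 2)|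
        ≤ |q * (⨍ y in ball x ε, v y)|
          + |(1 - q) * ((v (x + ε • (ξ : EucN N)) + v (x - ε • (ξ : EucN N))) / 2)| :=
          abs_add_le _ _
      _ ≤ q * C + (1 - q) * C := add_le_add e1 e2
      _ = C := by ring
  have hbdd : ∀ x ∈ closure Ω,
      BddAbove (Set.range fun ξ : sphere (0 : EucN N) 1 => mveOp q ε v (ξ : EucN N) x) := by
    intro x hx
    refine ⟨C, ?_⟩
    rintro y ⟨ξ, rfl⟩
    exact (abs_le.1 (hmveb x hx ξ)).2
  constructor
  · refine ⟨C, fun x hx => abs_le.2 ⟨?_, ?_⟩⟩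
    · obtain ⟨ξ₀⟩ := hsne
      calc -C ≤ mveOp q ε v (ξ₀ : EucN N) x := (abs_le.1 (hmveb x hx ξ₀)).1
        _ ≤ mvOp q ε v x := by rw [mvOp]; exact le_ciSup (hbdd x hx) ξ₀
    · rw [mvOp]
      exact ciSup_le fun ξ => (abs_le.1 (hmveb x hx ξ)).2
  · intro x hx t ht
    rw [mvOp] at ht
    obtain ⟨ξ₀, hξ₀⟩ := exists_lt_of_lt_ciSup ht
    have hξ : ‖(ξ₀ : EucN N)‖ = 1 := mem_sphere_zero_iff_norm.1 ξ₀.2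
    have hna : ‖ε • (ξ₀ : EucN N)‖ ≤ ε := by
      rw [norm_smul, hξ, Real.norm_eq_abs, abs_of_pos hε, mul_one]
    have hna' : ‖-(ε • (ξ₀ : EucN N))‖ ≤ ε := by rwa [norm_neg]
    have hlsc1 : LowerSemicontinuousWithinAt
        (fun z => q * (c₀ * ∫ y in ball z ε, w y)
          + ((1 - q) / 2) * (v (z + ε • (ξ₀ : EucN N)) + v (z + -(ε • (ξ₀ : EucN N)))))
        (closure Ω) x := by
      apply LowerSemicontinuousWithinAt.add
      · exact ((continuous_const.mul (continuous_const.mul hF)).continuousWithinAt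
          (x := x)).lowerSemicontinuousWithinAt
      · exact lscwa_const_mul (by linarith)
          ((htrans _ hna x hx).add (htrans _ hna' x hx))
    have heq : Set.EqOn
        (fun z => q * (c₀ * ∫ y in ball z ε, w y)
          + ((1 - q) / 2) * (v (z + ε • (ξ₀ : EucN N)) + v (z + -(ε • (ξ₀ : EucN N)))))
        (mveOp q ε v (ξ₀ : EucN N)) (closure Ω) := by
      intro z hz
      simp only [mveOp]
      rw [← havg z hz, ← sub_eq_add_neg]
      ring
    have hmve_lsc := lscwa_congr hlsc1 heq hx
    filter_upwards [hmve_lsc t hξ₀, eventually_mem_nhdsWithin] with z h1 h2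
    refine h1.trans_le ?_
    rw [mvOp]
    exact le_ciSup (hbdd z h2) ξ₀

end
end

section
/- Comparison principle for ε-mean value solutions: let v_ε be the ε-mean value solution with boundary data F and w_ε the ε-mean value solution with boundary data G, where F and G are bounded Lipschitz functions on Γ_ε. If F ≤ G on Γ_ε, then v_ε ≤ w_ε in closure(Ω). -/
open MeasureTheory Metric Set
open scoped ENNReal NNReal Classical

noncomputable section

variable {N : ℕ}

/-- `Γ_ε = Ω_ε \ closure Ω`. -/
def Geps (Ω : Set (EucN N)) (ε : ℝ) : Set (EucN N) := Oeps Ω ε \ closure Ω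

/-- `v` is an `ε`-mean value solution with boundary data `F`. -/
def IsMVS (q ε : ℝ) (Ω : Set (EucN N)) (F v : EucN N → ℝ) : Prop :=
  Measurable v ∧ (∃ C, ∀ x ∈ Oeps Ω ε, |v x| ≤ C) ∧ EqOn v F (Geps Ω ε) ∧
    LowerSemicontinuousOn v (closure Ω) ∧ ∀ x ∈ closure Ω, v x = mvOp q ε v x

/-- exterior corkscrew condition, satisfied by bounded Lipschitz domains -/
def Corkscrew (Ω : Set (EucN N)) (δbar μ : ℝ) : Prop :=
  ∀ δ, 0 < δ → δ < δbar → ∀ y ∈ frontier Ω, ∃ z, closedBall z (μ * δ) ⊆ ball y δ \ Ω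

/- ---------------- Auxiliary lemmas ---------------- -/

lemma mem_oeps_of_closure {Ω : Set (EucN N)} {ε : ℝ} (hε : 0 ≤ ε) {x : EucN N}
    (hx : x ∈ closure Ω) : x ∈ Oeps Ω ε := by
  simp only [Oeps, mem_setOf_eq, Metric.infDist_zero_of_mem_closure hx]
  exact hε

lemma ball_subset_oeps {Ω : Set (EucN N)} {ε : ℝ} {x : EucN N} (hx : x ∈ closure Ω) :
    ball x ε ⊆ Oeps Ω ε := by
  intro y hy
  have h1 : infDist y Ω ≤ infDist x Ω + dist y x := infDist_le_infDist_add_dist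
  have h2 : infDist x Ω = 0 := Metric.infDist_zero_of_mem_closure hx
  have h3 : dist y x < ε := mem_ball.mp hy
  simp only [Oeps, mem_setOf_eq]
  linarith

lemma pm_mem_oeps {Ω : Set (EucN N)} {ε : ℝ} (hε : 0 < ε) {x : EucN N}
    (hx : x ∈ closure Ω) {ξ : EucN N} (hξ : ‖ξ‖ = 1) :
    x + ε • ξ ∈ Oeps Ω ε ∧ x - ε • ξ ∈ Oeps Ω ε := by
  have h2 : infDist x Ω = 0 := Metric.infDist_zero_of_mem_closure hx
  have hn : ‖ε • ξ‖ = ε := by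
    rw [norm_smul, hξ, Real.norm_eq_abs, abs_of_pos hε, mul_one]
  constructor
  · have h1 : infDist (x + ε • ξ) Ω ≤ infDist x Ω + dist (x + ε • ξ) x :=
      infDist_le_infDist_add_dist
    have h3 : dist (x + ε • ξ) x = ε := by rw [dist_self_add_left, hn]
    simp only [Oeps, mem_setOf_eq]
    linarith
  · have h1 : infDist (x - ε • ξ) Ω ≤ infDist x Ω + dist (x - ε • ξ) x :=
      infDist_le_infDist_add_dist
    have h3 : dist (x - ε • ξ) x = ε := by rw [dist_self_sub_left, hn]
    simp only [Oeps, mem_setOf_eq]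
    linarith

lemma integrableOn_of_bdd {v : EucN N → ℝ} (hm : Measurable v) {s : Set (EucN N)}
    (hms : MeasurableSet s) (hfin : volume s ≠ ∞) {C : ℝ} (hb : ∀ x ∈ s, |v x| ≤ C) :
    IntegrableOn v s := by
  refine Measure.integrableOn_of_bounded (M := C) hfin hm.aestronglyMeasurable ?_
  filter_upwards [ae_restrict_mem hms] with x hx
  simpa [Real.norm_eq_abs] using hb x hx

lemma arith_aux {q S c a d I u0 Av Aw : ℝ} (hq0 : 0 ≤ q) (hb : 0 < a + d)
    (hmain : u0 ≤ q * (Av - Aw) + (1 - q) * S)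
    (hAv : Av - Aw = (a + d)⁻¹ * I)
    (hIB : I ≤ a * c + d * S) :
    u0 ≤ S - q * (a / (a + d)) * (S - c) := by
  have hbne : a + d ≠ 0 := hb.ne'
  have h10 : (a + d)⁻¹ * (a * c + d * S) = S - (a / (a + d)) * (S - c) := by
    field_simp
    ring
  have h9 : (a + d)⁻¹ * I ≤ (a + d)⁻¹ * (a * c + d * S) :=
    mul_le_mul_of_nonneg_left hIB (inv_nonneg.mpr hb.le)
  have h11 : q * ((a + d)⁻¹ * I) ≤ q * ((a + d)⁻¹ * (a * c + d * S)) :=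
    mul_le_mul_of_nonneg_left h9 hq0
  rw [hAv] at hmain
  rw [h10] at h11
  nlinarith [h11, hmain]

/-- The key inequality: if `v - w ≤ c` on a subset `T` of the ball `ball x ε`, then the
mean value property pushes `v x - w x` strictly below `S` proportionally to the volume
fraction of `T`. -/
lemma key_ineq (hN : 2 ≤ N) {q ε : ℝ} (hq0 : 0 < q) (hq1 : q ≤ 1) (hε : 0 < ε)
    {Ω : Set (EucN N)} {v w : EucN N → ℝ}
    (hvm : Measurable v) (hwm : Measurable w)
    {Cv Cw : ℝ} (hvb : ∀ y ∈ Oeps Ω ε, |v y| ≤ Cv) (hwb : ∀ y ∈ Oeps Ω ε, |w y| ≤ Cw)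
    (hveq : ∀ y ∈ closure Ω, v y = mvOp q ε v y)
    (hweq : ∀ y ∈ closure Ω, w y = mvOp q ε w y)
    {S : ℝ} (hS : ∀ y ∈ Oeps Ω ε, v y - w y ≤ S)
    {x : EucN N} (hx : x ∈ closure Ω)
    {T : Set (EucN N)} (hT : T ⊆ ball x ε) (hTm : MeasurableSet T)
    {c : ℝ} (hc : ∀ y ∈ T, v y - w y ≤ c) (hcS : c ≤ S) :
    v x - w x ≤ S - q * ((volume T).toReal / (volume (ball x ε)).toReal) * (S - c) := by
  have hBm : MeasurableSet (ball x ε) := measurableSet_ball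
  have hBO : ball x ε ⊆ Oeps Ω ε := ball_subset_oeps hx
  have hBfin : volume (ball x ε) ≠ ∞ := measure_ball_lt_top.ne
  have hBpos : 0 < (volume (ball x ε)).toReal :=
    ENNReal.toReal_pos (measure_ball_pos volume x hε).ne' hBfin
  have hIv : IntegrableOn v (ball x ε) :=
    integrableOn_of_bdd hvm hBm hBfin (fun y hy => hvb y (hBO hy))
  have hIw : IntegrableOn w (ball x ε) :=
    integrableOn_of_bdd hwm hBm hBfin (fun y hy => hwb y (hBO hy))
  have hIu : IntegrableOn (fun y => v y - w y) (ball x ε) := hIv.sub hIw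
  have hTfin : volume T ≠ ∞ := (lt_of_le_of_lt (measure_mono hT) measure_ball_lt_top).ne
  have hDfin : volume (ball x ε \ T) ≠ ∞ :=
    (lt_of_le_of_lt (measure_mono diff_subset) measure_ball_lt_top).ne
  have hab : (volume T).toReal + (volume (ball x ε \ T)).toReal
      = (volume (ball x ε)).toReal := by
    rw [← ENNReal.toReal_add hTfin hDfin,
      ← measure_union disjoint_sdiff_right (hBm.diff hTm), union_diff_cancel hT]
  -- integral bounds
  have hIT : ∫ y in T, (v y - w y) ≤ (volume T).toReal * c := by
    have h1 : ∫ y in T, (v y - w y) ≤ ∫ _y in T, c :=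
      setIntegral_mono_on (hIu.mono_set hT)
        (integrableOn_const hTfin) hTm hc
    simpa [setIntegral_const, smul_eq_mul, measureReal_def] using h1
  have hID : ∫ y in ball x ε \ T, (v y - w y) ≤ (volume (ball x ε \ T)).toReal * S := by
    have h1 : ∫ y in ball x ε \ T, (v y - w y) ≤ ∫ _y in ball x ε \ T, S :=
      setIntegral_mono_on (hIu.mono_set diff_subset)
        (integrableOn_const hDfin) (hBm.diff hTm)
        (fun y hy => hS y (hBO hy.1))
    simpa [setIntegral_const, smul_eq_mul, measureReal_def] using h1
  have hsplit : ∫ y in ball x ε, (v y - w y)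
      = (∫ y in T, (v y - w y)) + ∫ y in ball x ε \ T, (v y - w y) := by
    rw [← setIntegral_union disjoint_sdiff_right (hBm.diff hTm) (hIu.mono_set hT)
      (hIu.mono_set diff_subset), union_diff_cancel hT]
  have hIB : ∫ y in ball x ε, (v y - w y)
      ≤ (volume T).toReal * c + (volume (ball x ε \ T)).toReal * S := by
    rw [hsplit]; linarith
  -- average identity
  have hAv : (⨍ y in ball x ε, v y) - (⨍ y in ball x ε, w y)
      = ((volume (ball x ε)).toReal)⁻¹ * ∫ y in ball x ε, (v y - w y) := by
    rw [setAverage_eq volume v (ball x ε), setAverage_eq volume w (ball x ε),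
      integral_sub hIv hIw, smul_eq_mul, smul_eq_mul, measureReal_def]
    ring
  -- the mean value comparison step
  haveI hsph : Nonempty (sphere (0 : EucN N) 1) := by
    haveI : Nonempty (Fin N) := ⟨⟨0, by omega⟩⟩
    exact ((NormedSpace.sphere_nonempty).mpr zero_le_one).to_subtype
  have hq1' : (0:ℝ) ≤ 1 - q := by linarith
  have hmve : ∀ ξ : sphere (0 : EucN N) 1,
      mveOp q ε v (ξ : EucN N) x ≤ mveOp q ε w (ξ : EucN N) x +
        (q * ((⨍ y in ball x ε, v y) - (⨍ y in ball x ε, w y)) + (1 - q) * S) := by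
    intro ξ
    have hξn : ‖(ξ : EucN N)‖ = 1 := by
      simpa using mem_sphere_zero_iff_norm.mp ξ.2
    obtain ⟨hp1, hp2⟩ := pm_mem_oeps hε hx hξn
    have h1 : v (x + ε • (ξ : EucN N)) - w (x + ε • (ξ : EucN N)) ≤ S := hS _ hp1
    have h2 : v (x - ε • (ξ : EucN N)) - w (x - ε • (ξ : EucN N)) ≤ S := hS _ hp2
    have h3 : (1 - q) * ((v (x + ε • (ξ : EucN N)) + v (x - ε • (ξ : EucN N))) / 2)
        ≤ (1 - q) * ((w (x + ε • (ξ : EucN N)) + w (x - ε • (ξ : EucN N))) / 2 + S) :=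
      mul_le_mul_of_nonneg_left (by linarith) hq1'
    simp only [mveOp]
    linarith
  have hbddw : BddAbove (Set.range fun ξ : sphere (0 : EucN N) 1 =>
      mveOp q ε w (ξ : EucN N) x) := by
    refine ⟨q * (⨍ y in ball x ε, w y) + (1 - q) * Cw, ?_⟩
    rintro _ ⟨ξ, rfl⟩
    have hξn : ‖(ξ : EucN N)‖ = 1 := by
      simpa using mem_sphere_zero_iff_norm.mp ξ.2
    obtain ⟨hp1, hp2⟩ := pm_mem_oeps hε hx hξn
    have h1 := abs_le.mp (hwb _ hp1)
    have h2 := abs_le.mp (hwb _ hp2)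
    have h3 : (1 - q) * ((w (x + ε • (ξ : EucN N)) + w (x - ε • (ξ : EucN N))) / 2)
        ≤ (1 - q) * Cw := by
      apply mul_le_mul_of_nonneg_left _ hq1'
      linarith [h1.2, h2.2]
    simp only [mveOp]
    linarith
  have hsup : mvOp q ε v x ≤ mvOp q ε w x +
      (q * ((⨍ y in ball x ε, v y) - (⨍ y in ball x ε, w y)) + (1 - q) * S) := by
    refine ciSup_le fun ξ => ?_
    exact (hmve ξ).trans (by have h : mveOp q ε w (ξ : EucN N) x ≤ mvOp q ε w x := le_ciSup hbddw ξ; linarith)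
  have hmain : v x - w x ≤
      q * ((⨍ y in ball x ε, v y) - (⨍ y in ball x ε, w y)) + (1 - q) * S := by
    rw [hveq x hx, hweq x hx]
    linarith
  rw [← hab] at hAv ⊢
  exact arith_aux hq0.le (by rw [hab]; exact hBpos) hmain hAv hIB

lemma fb_step (hN : 2 ≤ N) {q ε : ℝ} (hq0 : 0 < q) (hq1 : q ≤ 1) (hε : 0 < ε)
    {Ω : Set (EucN N)} {v w : EucN N → ℝ}
    (hvm : Measurable v) (hwm : Measurable w)
    {Cv Cw : ℝ} (hvb : ∀ y ∈ Oeps Ω ε, |v y| ≤ Cv) (hwb : ∀ y ∈ Oeps Ω ε, |w y| ≤ Cw)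
    (hveq : ∀ y ∈ closure Ω, v y = mvOp q ε v y)
    (hweq : ∀ y ∈ closure Ω, w y = mvOp q ε w y)
    {S : ℝ} (hS : ∀ y ∈ Oeps Ω ε, v y - w y ≤ S)
    {y : EucN N} (hy : y ∈ closure Ω) {W : Set (EucN N)} (hW : W ⊆ ball y ε)
    (hWm : MeasurableSet W) {η : ℝ} (hη : 0 < η)
    (huy : S - q * ((volume W).toReal / (volume (ball y ε)).toReal) * η < v y - w y) :
    ∃ z ∈ W, S - η < v z - w z := by
  by_contra hcon
  push_neg at hcon
  have hk := key_ineq hN hq0 hq1 hε hvm hwm hvb hwb hveq hweq hS hy hW hWm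
    (c := S - η) hcon (by linarith)
  rw [sub_sub_cancel] at hk
  linarith

/-- points which have near-maximal points of `u` in every neighborhood (inside `closure Ω`). -/
def NearMax (Ω : Set (EucN N)) (u : EucN N → ℝ) (S : ℝ) (x' : EucN N) : Prop :=
  ∀ η > 0, ∀ ρ > 0, ∃ z ∈ ball x' ρ ∩ closure Ω, S - η < u z

lemma cluster_lemma {K : Set (EucN N)} (hK : IsCompact K) {g : EucN N → ℝ} {S : ℝ}
    (h : ∀ η > 0, ∃ pt ∈ K, S - η < g pt) :
    ∃ xh ∈ K, ∀ η > 0, ∀ ρ > 0, ∃ z ∈ ball xh ρ ∩ K, S - η < g z := by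
  have h' : ∀ n : ℕ, ∃ pt ∈ K, S - 1/(n+1) < g pt := fun n => h (1/(n+1)) (by positivity)
  choose p hpK hpu using h'
  obtain ⟨xh, hxK, φ, hφ, hlim⟩ := hK.tendsto_subseq hpK
  refine ⟨xh, hxK, fun η hη ρ hρ => ?_⟩
  obtain ⟨n₀, hn₀⟩ := exists_nat_one_div_lt hη
  obtain ⟨n₁, hn₁⟩ := Metric.tendsto_atTop.mp hlim ρ hρ
  refine ⟨p (φ (max n₀ n₁)), ⟨?_, hpK _⟩, ?_⟩
  · have := hn₁ (max n₀ n₁) (le_max_right _ _)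
    simpa [Function.comp, mem_ball] using this
  · have hmono : (n₀ : ℝ) + 1 ≤ (φ (max n₀ n₁) : ℝ) + 1 := by
      have h1 : n₀ ≤ φ (max n₀ n₁) := le_trans (le_max_left _ _) (hφ.le_apply)
      exact_mod_cast Nat.succ_le_succ h1
    have h2 : 1/((φ (max n₀ n₁) : ℝ) + 1) ≤ 1/((n₀ : ℝ) + 1) :=
      one_div_le_one_div_of_le (by positivity) hmono
    have h3 := hpu (φ (max n₀ n₁))
    linarith

/-- comparison principle for ε-mean value solutions: if `F ≤ G` on `Γ_ε`
then `v_ε ≤ w_ε` in `closure Ω`. -/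
theorem mvs_comparison (hN : 2 ≤ N) (p q ε : ℝ) (hp : 2 ≤ p)
    (hq : q = ((N : ℝ) + 2) / ((N : ℝ) + p)) (hε : 0 < ε)
    (Ω : Set (EucN N)) (hΩo : IsOpen Ω) (hΩb : Bornology.IsBounded Ω)
    (hΩc : IsConnected Ω) (δbar μ : ℝ) (hδbar : 0 < δbar) (hμ : μ ∈ Ioo (0 : ℝ) 1)
    (hΩlip : Corkscrew Ω δbar μ)
    (F G : EucN N → ℝ) (KF KG : ℝ≥0)
    (hF : LipschitzOnWith KF F (Geps Ω ε)) (hFb : ∃ C, ∀ x ∈ Geps Ω ε, |F x| ≤ C)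
    (hG : LipschitzOnWith KG G (Geps Ω ε)) (hGb : ∃ C, ∀ x ∈ Geps Ω ε, |G x| ≤ C)
    (v w : EucN N → ℝ) (hv : IsMVS q ε Ω F v) (hw : IsMVS q ε Ω G w)
    (hFG : ∀ x ∈ Geps Ω ε, F x ≤ G x) :
    ∀ x ∈ closure Ω, v x ≤ w x := by
  classical
  obtain ⟨hvm, ⟨Cv, hvb⟩, hvF, hvlsc, hveq⟩ := hv
  obtain ⟨hwm, ⟨Cw, hwb⟩, hwG, hwlsc, hweq⟩ := hw
  have hΩne : Ω.Nonempty := hΩc.nonempty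
  have hNn : (0:ℝ) ≤ (N:ℝ) := Nat.cast_nonneg N
  have hNp : (0:ℝ) < (N:ℝ) + p := by linarith
  have hq0 : 0 < q := by rw [hq]; apply div_pos (by linarith) hNp
  have hq1 : q ≤ 1 := by rw [hq, div_le_one hNp]; linarith
  have hOc : closure Ω ⊆ Oeps Ω ε := fun z hz => mem_oeps_of_closure hε.le hz
  have hbddS : BddAbove ((fun y => v y - w y) '' Oeps Ω ε) := by
    refine ⟨Cv + Cw, ?_⟩
    rintro _ ⟨y, hy, rfl⟩
    have h1 := abs_le.mp (hvb y hy)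
    have h2 := abs_le.mp (hwb y hy)
    dsimp only
    linarith [h1.2, h2.1]
  have hneS : ((fun y => v y - w y) '' Oeps Ω ε).Nonempty := by
    obtain ⟨z, hz⟩ := hΩne
    exact ⟨_, ⟨z, hOc (subset_closure hz), rfl⟩⟩
  set S := sSup ((fun y => v y - w y) '' Oeps Ω ε) with hSdef
  have hSle : ∀ y ∈ Oeps Ω ε, v y - w y ≤ S := fun y hy => le_csSup hbddS ⟨y, hy, rfl⟩
  intro x hx
  suffices hS0 : S ≤ 0 by
    have := hSle x (hOc hx); linarith
  by_contra hS0'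
  push_neg at hS0'
  -- boundary bound
  have hGle : ∀ z ∈ Geps Ω ε, v z - w z ≤ 0 := by
    intro z hz
    rw [hvF hz, hwG hz]
    linarith [hFG z hz]
  -- near-maximal points exist in closure Ω
  have step1 : ∀ η > 0, ∃ pt ∈ closure Ω, S - η < v pt - w pt := by
    intro η hη
    have hmin : 0 < min η S := lt_min hη hS0'
    have hlt : S - min η S < S := by linarith
    obtain ⟨_, ⟨z, hz, rfl⟩, hzgt⟩ := exists_lt_of_lt_csSup hneS hlt
    have hzgt' : S - min η S < v z - w z := hzgt
    by_cases hzc : z ∈ closure Ω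
    · exact ⟨z, hzc, by have := min_le_left η S; linarith⟩
    · exfalso
      have hg : z ∈ Geps Ω ε := ⟨hz, hzc⟩
      have := hGle z hg
      have := min_le_right η S
      linarith
  -- volume abbreviations
  have hvolb : ∀ y : EucN N, volume (ball y ε) = volume (ball (0:EucN N) ε) :=
    fun y => Measure.addHaar_ball_center volume y ε
  have hvb0 : 0 < (volume (ball (0:EucN N) ε)).toReal :=
    ENNReal.toReal_pos (measure_ball_pos volume _ hε).ne' measure_ball_lt_top.ne
  -- specialized fb step
  have hfb : ∀ y ∈ closure Ω, ∀ W : Set (EucN N), W ⊆ ball y ε → MeasurableSet W →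
      ∀ η > 0, S - q * ((volume W).toReal / (volume (ball (0:EucN N) ε)).toReal) * η
        < v y - w y → ∃ z ∈ W, S - η < v z - w z := by
    intro y hy W hW hWm η hη hlt
    refine fb_step hN hq0 hq1 hε hvm hwm hvb hwb hveq hweq hSle hy hW hWm hη ?_
    rwa [hvolb y]
  -- propagation step
  have hstep : ∀ xb, NearMax Ω (fun y => v y - w y) S xb →
      ∀ W : Set (EucN N), IsOpen W → W.Nonempty → W ⊆ ball xb (ε/2) →
      ∀ η > 0, ∃ z ∈ W, S - η < v z - w z := by
    intro xb hR W hWo hWne hWsub η hη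
    have hWpos : 0 < (volume W).toReal := by
      refine ENNReal.toReal_pos (hWo.measure_pos volume hWne).ne' ?_
      exact (lt_of_le_of_lt (measure_mono hWsub) measure_ball_lt_top).ne
    have hη' : 0 < q * ((volume W).toReal / (volume (ball (0:EucN N) ε)).toReal) * η :=
      mul_pos (mul_pos hq0 (div_pos hWpos hvb0)) hη
    obtain ⟨y, ⟨hyb, hyc⟩, hyu⟩ := hR _ hη' (ε/4) (by linarith)
    refine hfb y hyc W ?_ hWo.measurableSet η hη hyu
    intro pw hpw
    have h1 : dist pw xb < ε/2 := mem_ball.mp (hWsub hpw)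
    have h2 : dist y xb < ε/4 := mem_ball.mp hyb
    have h3 : dist pw y ≤ dist pw xb + dist xb y := dist_triangle _ _ _
    rw [dist_comm xb y] at h3
    rw [mem_ball]
    linarith
  -- claim O : NearMax propagates to nearby points of closure Ω
  have claimO : ∀ xb, NearMax Ω (fun y => v y - w y) S xb →
      ∀ x' ∈ closure Ω, dist x' xb < ε/4 → NearMax Ω (fun y => v y - w y) S x' := by
    intro xb hxb x' hx'c hdist η hη ρ hρ
    have hρ' : 0 < min ρ (ε/8) := lt_min hρ (by linarith)
    have hWne : (Ω ∩ ball x' (min ρ (ε/8))).Nonempty := by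
      obtain ⟨z, hz, hzd⟩ := Metric.mem_closure_iff.mp hx'c _ hρ'
      exact ⟨z, hz, mem_ball.mpr (by rw [dist_comm]; exact hzd)⟩
    have hWsub : Ω ∩ ball x' (min ρ (ε/8)) ⊆ ball xb (ε/2) := by
      intro z hz
      have h1 : dist z x' < min ρ (ε/8) := mem_ball.mp hz.2
      have h2 : min ρ (ε/8) ≤ ε/8 := min_le_right _ _
      have h3 : dist z xb ≤ dist z x' + dist x' xb := dist_triangle _ _ _
      rw [mem_ball]
      linarith
    obtain ⟨z, hzW, hzu⟩ := hstep xb hxb (Ω ∩ ball x' (min ρ (ε/8)))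
      (hΩo.inter isOpen_ball) hWne hWsub η hη
    refine ⟨z, ⟨?_, subset_closure hzW.1⟩, hzu⟩
    exact ball_subset_ball (min_le_left _ _) hzW.2
  -- a NearMax point exists in closure Ω
  have hK : IsCompact (closure Ω) := hΩb.isCompact_closure
  obtain ⟨xh, hxhc, hxhR⟩ := cluster_lemma hK step1
  have hxhNM : NearMax Ω (fun y => v y - w y) S xh := hxhR
  -- a NearMax point exists in Ω
  obtain ⟨c₀, hc₀Ω, hc₀d⟩ := Metric.mem_closure_iff.mp hxhc (ε/8) (by linarith)
  obtain ⟨ρc, hρc0, hρcsub⟩ : ∃ r > 0, closedBall c₀ r ⊆ Ω ∩ ball xh (ε/4) := by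
    have hopen : IsOpen (Ω ∩ ball xh (ε/4)) := hΩo.inter isOpen_ball
    have hc₀mem : c₀ ∈ Ω ∩ ball xh (ε/4) :=
      ⟨hc₀Ω, mem_ball.mpr (by rw [dist_comm]; linarith)⟩
    simpa using Metric.nhds_basis_closedBall.mem_iff.mp (hopen.mem_nhds hc₀mem)
  have hKc : IsCompact (closedBall c₀ ρc) := isCompact_closedBall _ _
  have hcl : ∀ η > 0, ∃ pt ∈ closedBall c₀ ρc, S - η < v pt - w pt := by
    intro η hη
    have hWsub : ball c₀ ρc ⊆ ball xh (ε/2) := by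
      intro z hz
      have := (hρcsub (ball_subset_closedBall hz)).2
      exact ball_subset_ball (by linarith) this
    obtain ⟨z, hz, hzu⟩ := hstep xh hxhNM (ball c₀ ρc) isOpen_ball
      ⟨c₀, mem_ball_self hρc0⟩ hWsub η hη
    exact ⟨z, ball_subset_closedBall hz, hzu⟩
  obtain ⟨xo, hxoK, hxocl⟩ := cluster_lemma hKc hcl
  have hxoΩ : xo ∈ Ω := (hρcsub hxoK).1
  have hxoNM : NearMax Ω (fun y => v y - w y) S xo := by
    intro η hη ρ hρ
    obtain ⟨z, ⟨hz1, hz2⟩, hzu⟩ := hxocl η hη ρ hρ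
    exact ⟨z, ⟨hz1, subset_closure (hρcsub hz2).1⟩, hzu⟩
  -- connectedness : every point of Ω is NearMax
  have hΩR : ∀ z ∈ Ω, NearMax Ω (fun y => v y - w y) S z := by
    by_contra hns
    push_neg at hns
    obtain ⟨bpt, hbΩ, hbR⟩ := hns
    have hUo : IsOpen (⋃ xb ∈ {x' | NearMax Ω (fun y => v y - w y) S x'}, ball xb (ε/4)) :=
      isOpen_biUnion (fun _ _ => isOpen_ball)
    have hVo : IsOpen {x' | NearMax Ω (fun y => v y - w y) S x'}ᶜ := by
      rw [Metric.isOpen_iff]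
      intro xx hxx
      simp only [mem_compl_iff, mem_setOf_eq, NearMax] at hxx
      push_neg at hxx
      obtain ⟨η, hη, ρ, hρ, hall⟩ := hxx
      refine ⟨ρ/2, by linarith, ?_⟩
      intro yy hyy
      simp only [mem_compl_iff, mem_setOf_eq, NearMax]
      push_neg
      refine ⟨η, hη, ρ/2, by linarith, ?_⟩
      intro z hz
      have h1 : dist z xx ≤ dist z yy + dist yy xx := dist_triangle _ _ _
      have h2 : dist z yy < ρ/2 := mem_ball.mp hz.1
      have h3 : dist yy xx < ρ/2 := mem_ball.mp hyy
      exact hall z ⟨mem_ball.mpr (by linarith), hz.2⟩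
    have hcover : Ω ⊆ (⋃ xb ∈ {x' | NearMax Ω (fun y => v y - w y) S x'}, ball xb (ε/4))
        ∪ {x' | NearMax Ω (fun y => v y - w y) S x'}ᶜ := by
      intro z hz
      by_cases hzR : NearMax Ω (fun y => v y - w y) S z
      · exact Or.inl (mem_biUnion hzR (mem_ball_self (by linarith)))
      · exact Or.inr hzR
    have hU : (Ω ∩ (⋃ xb ∈ {x' | NearMax Ω (fun y => v y - w y) S x'},
        ball xb (ε/4))).Nonempty :=
      ⟨xo, hxoΩ, mem_biUnion hxoNM (mem_ball_self (by linarith))⟩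
    have hV : (Ω ∩ {x' | NearMax Ω (fun y => v y - w y) S x'}ᶜ).Nonempty :=
      ⟨bpt, hbΩ, hbR⟩
    obtain ⟨z, hzΩ, hzU, hzV⟩ := hΩc.isPreconnected _ _ hUo hVo hcover hU hV
    obtain ⟨xb, hxbR, hzb⟩ := mem_iUnion₂.mp hzU
    exact hzV (claimO xb hxbR z (subset_closure hzΩ) (mem_ball.mp hzb))
  -- frontier point and corkscrew
  haveI : Nonempty (Fin N) := ⟨⟨0, by omega⟩⟩
  have hfront : (frontier Ω).Nonempty := by
    rw [nonempty_frontier_iff]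
    refine ⟨hΩne, fun h => ?_⟩
    exact NormedSpace.unbounded_univ ℝ (EucN N) (h ▸ hΩb)
  obtain ⟨y₀, hy₀⟩ := hfront
  have hy₀c : y₀ ∈ closure Ω := frontier_subset_closure hy₀
  have hδ₀0 : 0 < min (δbar/2) (ε/8) := lt_min (by linarith) (by linarith)
  have hδ₀bar : min (δbar/2) (ε/8) < δbar := lt_of_le_of_lt (min_le_left _ _) (by linarith)
  have hδ₀ε : min (δbar/2) (ε/8) ≤ ε/8 := min_le_right _ _
  obtain ⟨z₀, hz₀⟩ := hΩlip _ hδ₀0 hδ₀bar y₀ hy₀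
  have hμδ : 0 < μ * min (δbar/2) (ε/8) := mul_pos hμ.1 hδ₀0
  have hμ1 : μ * min (δbar/2) (ε/8) ≤ min (δbar/2) (ε/8) := by
    nlinarith [hμ.2, hδ₀0]
  -- a point outside closure Ω inside the corkscrew ball
  have hζex : ∃ ζ ∈ ball z₀ (μ * min (δbar/2) (ε/8)), ζ ∉ closure Ω := by
    by_contra hcon
    push_neg at hcon
    have hz₀c : z₀ ∈ closure Ω := hcon z₀ (mem_ball_self hμδ)
    obtain ⟨zz, hzzΩ, hzzd⟩ := Metric.mem_closure_iff.mp hz₀c _ hμδ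
    have hmem : zz ∈ closedBall z₀ (μ * min (δbar/2) (ε/8)) := by
      rw [mem_closedBall, dist_comm]; exact hzzd.le
    exact (hz₀ hmem).2 hzzΩ
  obtain ⟨ζ, hζb, hζnc⟩ := hζex
  obtain ⟨r₀, hr₀0, hr₀sub⟩ : ∃ r > 0,
      ball ζ r ⊆ ball z₀ (μ * min (δbar/2) (ε/8)) ∩ (closure Ω)ᶜ := by
    have ho : IsOpen (ball z₀ (μ * min (δbar/2) (ε/8)) ∩ (closure Ω)ᶜ) :=
      isOpen_ball.inter isClosed_closure.isOpen_compl
    exact Metric.isOpen_iff.mp ho ζ ⟨hζb, hζnc⟩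
  have hz₀y₀ : dist z₀ y₀ < min (δbar/2) (ε/8) := mem_ball.mp (hz₀ (mem_closedBall_self hμδ.le)).1
  have hPG : ball ζ r₀ ⊆ Geps Ω ε := by
    intro pz hpz
    obtain ⟨hp1, hp2⟩ := hr₀sub hpz
    refine ⟨?_, hp2⟩
    have h1 : dist pz z₀ < μ * min (δbar/2) (ε/8) := mem_ball.mp hp1
    have h2 : infDist pz Ω ≤ infDist y₀ Ω + dist pz y₀ := infDist_le_infDist_add_dist
    have h3 : infDist y₀ Ω = 0 := Metric.infDist_zero_of_mem_closure hy₀c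
    have h4 : dist pz y₀ ≤ dist pz z₀ + dist z₀ y₀ := dist_triangle _ _ _
    simp only [Oeps, mem_setOf_eq]
    linarith
  have hPu : ∀ pz ∈ ball ζ r₀, v pz - w pz ≤ 0 := fun pz hpz => hGle pz (hPG hpz)
  -- point of Ω close to y₀
  obtain ⟨xs, hxsΩ, hxsd⟩ := Metric.mem_closure_iff.mp hy₀c (ε/8) (by linarith)
  have hxsNM : NearMax Ω (fun y => v y - w y) S xs := hΩR xs hxsΩ
  -- final contradiction
  have hPpos : 0 < (volume (ball ζ r₀)).toReal :=
    ENNReal.toReal_pos (measure_ball_pos volume _ hr₀0).ne' measure_ball_lt_top.ne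
  have hη₁ : 0 < q * ((volume (ball ζ r₀)).toReal /
      (volume (ball (0:EucN N) ε)).toReal) * S :=
    mul_pos (mul_pos hq0 (div_pos hPpos hvb0)) hS0'
  obtain ⟨zf, ⟨hzfb, hzfc⟩, hzfu⟩ := hxsNM _ hη₁ (ε/8) (by linarith)
  have hPsub : ball ζ r₀ ⊆ ball zf ε := by
    intro pz hpz
    have h1 : dist pz z₀ < μ * min (δbar/2) (ε/8) := (hr₀sub hpz).1
    have h4 : dist pz y₀ ≤ dist pz z₀ + dist z₀ y₀ := dist_triangle _ _ _
    have h5 : dist pz zf ≤ dist pz y₀ + dist y₀ xs + dist xs zf := dist_triangle4 _ _ _ _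
    have h6 : dist xs zf < ε/8 := by rw [dist_comm]; exact mem_ball.mp hzfb
    rw [mem_ball]
    linarith
  have hkey := key_ineq hN hq0 hq1 hε hvm hwm hvb hwb hveq hweq hSle hzfc hPsub
    measurableSet_ball (c := 0) hPu hS0'.le
  rw [hvolb zf, sub_zero] at hkey
  linarith

end
end

section
/- Let w : Ω_ε → ℝ be a bounded Borel function and C₁ > 0 a constant such that |M^ε w(x) − w(x)| ≤ C₁·ε³ for all x ∈ closure(Ω). Fix x₀ ∈ Ω_ε. Then: (i) for every Borel control σ, the sequence M_k := w(x_k) − C₁·k·ε³ is a supermartingale under P^{x₀}_σ with respect to the natural filtration {F_k}; (ii) if σ₀ is a Borel control satisfying M^ε_{σ₀(x)} w(x) = M^ε w(x) for all x ∈ closure(Ω), then the sequence N_k := w(x_k) + C₁·k·ε³ is a submartingale under P^{x₀}_{σ₀}. -/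
open MeasureTheory Metric Set
open scoped ENNReal NNReal Classical

noncomputable section

variable {N : ℕ}

/-- a Borel control with values in the unit sphere -/
def IsControl (σ : EucN N → EucN N) : Prop := Measurable σ ∧ ∀ x, ‖σ x‖ = 1

/-- the transition probability measures `γ_σ[x]` -/
def gamKer (q ε : ℝ) (Ω : Set (EucN N)) (σ : EucN N → EucN N) (x : EucN N) :
    Measure (EucN N) :=
  if x ∈ closure Ω then
    ENNReal.ofReal q • ((volume (ball x ε))⁻¹ • volume.restrict (ball x ε)) +
      ENNReal.ofReal ((1 - q) / 2) •
        (Measure.dirac (x + ε • σ x) + Measure.dirac (x - ε • σ x))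
  else Measure.dirac x

/-- probability of the cylinder `{ω : ω i ∈ A i, i ≤ n}` for the chain started at `x`
with transitions `γ`. -/
def cylProb (γ : EucN N → Measure (EucN N)) : ℕ → EucN N → (ℕ → Set (EucN N)) → ℝ≥0∞
  | 0, x, A => (A 0).indicator 1 x
  | n + 1, x, A => (A 0).indicator 1 x * ∫⁻ y, cylProb γ n y (fun i => A (i + 1)) ∂(γ x)

/-- `P` is the trajectory (Ionescu-Tulcea/Kolmogorov) measure of the chain started at
`x₀` with transition kernel `γ`. -/
def IsTrajMeasure (γ : EucN N → Measure (EucN N)) (x₀ : EucN N)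
    (P : Measure (ℕ → EucN N)) : Prop :=
  IsProbabilityMeasure P ∧
    ∀ (n : ℕ) (A : ℕ → Set (EucN N)), (∀ i, MeasurableSet (A i)) →
      P {ω | ∀ i ≤ n, ω i ∈ A i} = cylProb γ n x₀ A

/-- the natural filtration of the coordinate process -/
def trajFilt (N : ℕ) : Filtration ℕ (MeasurableSpace.pi : MeasurableSpace (ℕ → EucN N)) :=
  Filtration.natural (fun n (ω : ℕ → EucN N) => ω n)
    (fun n => (measurable_pi_apply n).stronglyMeasurable)

/-! ### Auxiliary development -/

lemma aux_tor (a : ℝ) : (ENNReal.ofReal a).toReal - (ENNReal.ofReal (-a)).toReal = a := by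
  rcases le_total 0 a with h | h
  · rw [ENNReal.toReal_ofReal h, ENNReal.ofReal_eq_zero.mpr (neg_nonpos.mpr h)]
    simp
  · rw [ENNReal.ofReal_eq_zero.mpr h, ENNReal.toReal_ofReal (neg_nonneg.mpr h)]
    simp

lemma aux_measurableSet_oeps (Ω : Set (EucN N)) (ε : ℝ) : MeasurableSet (Oeps Ω ε) :=
  (isClosed_le (continuous_infDist_pt Ω) continuous_const).measurableSet

lemma aux_dist_mem_oeps {Ω : Set (EucN N)} {ε : ℝ} {x y : EucN N} (hx : x ∈ closure Ω)
    (hd : dist y x ≤ ε) : y ∈ Oeps Ω ε := by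
  rcases eq_empty_or_nonempty Ω with rfl | hne
  · simp at hx
  · have h0 := (mem_closure_iff_infDist_zero hne).mp hx
    have h1 : infDist y Ω ≤ infDist x Ω + dist y x := infDist_le_infDist_add_dist
    have : infDist y Ω ≤ ε := by rw [h0] at h1; linarith
    exact this

lemma aux_closure_subset_oeps {Ω : Set (EucN N)} {ε : ℝ} (hε : 0 ≤ ε) :
    closure Ω ⊆ Oeps Ω ε := fun x hx =>
  aux_dist_mem_oeps hx (by simpa using hε)

lemma aux_pt_mem_oeps {Ω : Set (EucN N)} {ε : ℝ} (hε : 0 < ε) {x ξ : EucN N}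
    (hx : x ∈ closure Ω) (hξ : ‖ξ‖ = 1) :
    x + ε • ξ ∈ Oeps Ω ε ∧ x - ε • ξ ∈ Oeps Ω ε := by
  constructor
  · refine aux_dist_mem_oeps hx ?_
    rw [dist_eq_norm]
    simp [norm_smul, hξ, abs_of_nonneg hε.le]
  · refine aux_dist_mem_oeps hx ?_
    rw [dist_eq_norm]
    simp [norm_smul, hξ, abs_of_nonneg hε.le]

lemma aux_gamKer_prob {q ε : ℝ} (hq0 : 0 ≤ q) (hq1 : q ≤ 1) (hε : 0 < ε)
    (Ω : Set (EucN N)) (σ : EucN N → EucN N) (x : EucN N) :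
    IsProbabilityMeasure (gamKer q ε Ω σ x) := by
  constructor
  rw [gamKer]
  split_ifs with hx
  · have hb0 : volume (ball x ε) ≠ 0 := (measure_ball_pos _ _ hε).ne'
    have hbt : volume (ball x ε) ≠ ∞ := measure_ball_lt_top.ne
    rw [Measure.add_apply, Measure.smul_apply, Measure.smul_apply, Measure.smul_apply,
      Measure.restrict_apply_univ, Measure.add_apply]
    simp only [smul_eq_mul, measure_univ]
    rw [ENNReal.inv_mul_cancel hb0 hbt, mul_one]
    have h2 : (1 : ℝ≥0∞) + 1 = ENNReal.ofReal 2 := by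
      rw [ENNReal.ofReal_ofNat]; norm_num
    rw [h2, ← ENNReal.ofReal_mul (by linarith : (0:ℝ) ≤ (1 - q)/2), div_mul_cancel₀ _ (two_ne_zero),
      ← ENNReal.ofReal_add hq0 (by linarith)]
    norm_num
  · exact measure_univ

lemma aux_gamKer_null {q ε : ℝ} (hε : 0 < ε) {Ω : Set (EucN N)} {σ : EucN N → EucN N}
    (hσ : ∀ x, ‖σ x‖ = 1) {x : EucN N} (hx : x ∈ Oeps Ω ε) :
    gamKer q ε Ω σ x (Oeps Ω ε)ᶜ = 0 := by
  have hms : MeasurableSet (Oeps Ω ε)ᶜ := (aux_measurableSet_oeps Ω ε).compl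
  rw [gamKer]
  split_ifs with hcl
  · have h1 : (Oeps Ω ε)ᶜ ∩ ball x ε = ∅ := by
      rw [eq_empty_iff_forall_notMem]
      rintro y ⟨hyc, hyb⟩
      exact hyc (aux_dist_mem_oeps hcl (mem_ball.mp hyb).le)
    have h2 : x + ε • σ x ∈ Oeps Ω ε := (aux_pt_mem_oeps hε hcl (hσ x)).1
    have h3 : x - ε • σ x ∈ Oeps Ω ε := (aux_pt_mem_oeps hε hcl (hσ x)).2
    rw [Measure.add_apply, Measure.smul_apply, Measure.smul_apply, Measure.smul_apply,
      Measure.restrict_apply hms, Measure.add_apply, h1,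
      Measure.dirac_apply' _ hms, Measure.dirac_apply' _ hms]
    simp [indicator_of_notMem, h2, h3]
  · rw [Measure.dirac_apply' _ hms]
    simp [hx]

lemma aux_measurable_vol_inter {ε : ℝ} (s : Set (EucN N)) (hs : MeasurableSet s) :
    Measurable fun x : EucN N => volume (s ∩ ball x ε) := by
  have hms : MeasurableSet {p : EucN N × EucN N | p.2 ∈ s ∧ dist p.2 p.1 < ε} := by
    refine (measurable_snd hs).inter ?_
    exact measurableSet_lt ((continuous_dist.comp (continuous_snd.prodMk
      continuous_fst)).measurable) measurable_const
  have hind : Measurable ({p : EucN N × EucN N | p.2 ∈ s ∧ dist p.2 p.1 < ε}.indicator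
      (fun _ => (1 : ℝ≥0∞))) := measurable_one.indicator hms
  have key : ∀ x : EucN N, (∫⁻ y, {p : EucN N × EucN N | p.2 ∈ s ∧ dist p.2 p.1 < ε}.indicator
      (fun _ => (1 : ℝ≥0∞)) (x, y) ∂volume) = volume (s ∩ ball x ε) := by
    intro x
    have : (fun y => {p : EucN N × EucN N | p.2 ∈ s ∧ dist p.2 p.1 < ε}.indicator
        (fun _ => (1 : ℝ≥0∞)) (x, y)) = (s ∩ ball x ε).indicator (fun _ => (1 : ℝ≥0∞)) := by
      funext y
      simp only [indicator_apply, mem_setOf_eq, mem_inter_iff, mem_ball]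
    rw [this]
    exact lintegral_indicator_one (hs.inter measurableSet_ball)
  have h2 : (fun x : EucN N => volume (s ∩ ball x ε))
      = fun x => ∫⁻ y, {p : EucN N × EucN N | p.2 ∈ s ∧ dist p.2 p.1 < ε}.indicator
        (fun _ => (1 : ℝ≥0∞)) (x, y) ∂volume := funext fun x => (key x).symm
  rw [h2]
  exact hind.lintegral_prod_right'

lemma aux_gamKer_measurable {q ε : ℝ} {Ω : Set (EucN N)} {σ : EucN N → EucN N}
    (hσ : Measurable σ) : Measurable (gamKer q ε Ω σ) := by
  apply Measure.measurable_of_measurable_coe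
  intro s hs
  have hcm : MeasurableSet (closure Ω) := isClosed_closure.measurableSet
  have hball : Measurable fun x : EucN N => volume (ball x ε) := by
    have := aux_measurable_vol_inter (N := N) (ε := ε) univ MeasurableSet.univ
    simpa using this
  have hdir : ∀ c : ℝ, Measurable fun x : EucN N => Measure.dirac (x + c • σ x) s := by
    intro c
    have h1 : Measurable fun x : EucN N => x + c • σ x :=
      measurable_id.add (hσ.const_smul c)
    have h2 : (fun x : EucN N => Measure.dirac (x + c • σ x) s)
        = fun x => s.indicator (fun _ => (1:ℝ≥0∞)) (x + c • σ x) :=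
      funext fun x => Measure.dirac_apply' _ hs
    rw [h2]
    exact (measurable_one.indicator hs).comp h1
  have hbr1 : Measurable fun x : EucN N =>
      (ENNReal.ofReal q • ((volume (ball x ε))⁻¹ • volume.restrict (ball x ε)) +
        ENNReal.ofReal ((1 - q) / 2) •
          (Measure.dirac (x + ε • σ x) + Measure.dirac (x - ε • σ x))) s := by
    simp only [Measure.add_apply, Measure.smul_apply, smul_eq_mul,
      Measure.restrict_apply hs]
    apply Measurable.add
    · exact (measurable_const.mul ((hball.inv).mul (aux_measurable_vol_inter s hs)))
    · apply measurable_const.mul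
      apply Measurable.add
      · exact hdir ε
      · have h3 : (fun x : EucN N => Measure.dirac (x - ε • σ x) s)
            = fun x : EucN N => Measure.dirac (x + (-ε) • σ x) s := by
          funext x; rw [neg_smul, ← sub_eq_add_neg]
        rw [h3]
        exact hdir (-ε)
  have hbr2 : Measurable fun x : EucN N => Measure.dirac x s := by
    have h2 : (fun x : EucN N => Measure.dirac x s)
        = fun x => s.indicator (fun _ => (1:ℝ≥0∞)) x := funext fun x => Measure.dirac_apply' _ hs
    rw [h2]
    exact measurable_one.indicator hs
  have : (fun x => gamKer q ε Ω σ x s) = fun x =>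
      if x ∈ closure Ω then
        (ENNReal.ofReal q • ((volume (ball x ε))⁻¹ • volume.restrict (ball x ε)) +
          ENNReal.ofReal ((1 - q) / 2) •
            (Measure.dirac (x + ε • σ x) + Measure.dirac (x - ε • σ x))) s
      else Measure.dirac x s := by
    funext x
    rw [gamKer]
    split_ifs <;> rfl
  rw [this]
  exact Measurable.ite hcm hbr1 hbr2

/-- the law of the `n`-th coordinate of the chain started at `x`, on the cylinder event
determined by `A`. -/
def cylMeas (γ : EucN N → Measure (EucN N)) : ℕ → EucN N → (ℕ → Set (EucN N)) → Measure (EucN N)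
  | 0, x, A => (Measure.dirac x).restrict (A 0)
  | n + 1, x, A => (A 0).indicator (fun _ => (1 : ℝ≥0∞)) x •
      (γ x).bind (fun y => cylMeas γ n y (fun i => A (i + 1)))

lemma aux_cylMeas_measurable {γ : EucN N → Measure (EucN N)} (hγ : Measurable γ)
    (n : ℕ) (A : ℕ → Set (EucN N)) (hA : ∀ i, MeasurableSet (A i)) :
    Measurable fun x => cylMeas γ n x A := by
  induction n generalizing A with
  | zero =>
    apply Measure.measurable_of_measurable_coe
    intro C hC
    have h : (fun x => cylMeas γ 0 x A C) = fun x => (C ∩ A 0).indicator (fun _ => (1:ℝ≥0∞)) x := by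
      funext x
      show ((Measure.dirac x).restrict (A 0)) C = _
      rw [Measure.restrict_apply hC, Measure.dirac_apply' _ (hC.inter (hA 0))]
      rfl
    rw [h]
    exact measurable_one.indicator (hC.inter (hA 0))
  | succ n ih =>
    have ih' := ih (fun i => A (i + 1)) (fun i => hA (i + 1))
    apply Measure.measurable_of_measurable_coe
    intro C hC
    have h : (fun x => cylMeas γ (n + 1) x A C)
        = fun x => (A 0).indicator (fun _ => (1:ℝ≥0∞)) x *
            ∫⁻ y, cylMeas γ n y (fun i => A (i + 1)) C ∂(γ x) := by
      funext x
      show ((A 0).indicator (fun _ => (1 : ℝ≥0∞)) x •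
        (γ x).bind (fun y => cylMeas γ n y (fun i => A (i + 1)))) C = _
      rw [Measure.smul_apply, Measure.bind_apply hC ih'.aemeasurable, smul_eq_mul]
    rw [h]
    refine (measurable_one.indicator (hA 0)).mul ?_
    exact (Measure.measurable_lintegral ((Measure.measurable_coe hC).comp ih')).comp hγ

lemma aux_cylMeas_apply {γ : EucN N → Measure (EucN N)} (hγ : Measurable γ)
    (n : ℕ) (x : EucN N) (A : ℕ → Set (EucN N)) (hA : ∀ i, MeasurableSet (A i))
    {C : Set (EucN N)} (hC : MeasurableSet C) :
    cylMeas γ n x A C = cylProb γ n x (fun i => if i = n then A n ∩ C else A i) := by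
  induction n generalizing x A with
  | zero =>
    show ((Measure.dirac x).restrict (A 0)) C = ((if (0:ℕ) = 0 then A 0 ∩ C else A 0)).indicator 1 x
    rw [Measure.restrict_apply hC, Measure.dirac_apply' _ (hC.inter (hA 0)), if_pos rfl,
      inter_comm]
  | succ n ih =>
    have hmeas := aux_cylMeas_measurable hγ n (fun i => A (i + 1)) (fun i => hA (i + 1))
    show ((A 0).indicator (fun _ => (1 : ℝ≥0∞)) x •
        (γ x).bind (fun y => cylMeas γ n y (fun i => A (i + 1)))) C = _
    rw [Measure.smul_apply, Measure.bind_apply hC hmeas.aemeasurable, smul_eq_mul]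
    show _ = cylProb γ (n + 1) x (fun i => if i = n + 1 then A (n + 1) ∩ C else A i)
    rw [show cylProb γ (n + 1) x (fun i => if i = n + 1 then A (n + 1) ∩ C else A i)
        = ((if (0:ℕ) = n + 1 then A (n+1) ∩ C else A 0)).indicator 1 x *
          ∫⁻ y, cylProb γ n y (fun i => if i + 1 = n + 1 then A (n + 1 ) ∩ C else A (i+1)) ∂(γ x)
      from rfl]
    rw [if_neg (Nat.succ_ne_zero n).symm]
    have harg : (fun i => if i + 1 = n + 1 then A (n + 1) ∩ C else A (i + 1))
        = fun i => if i = n then (fun j => A (j + 1)) n ∩ C else (fun j => A (j + 1)) i := by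
      funext i
      by_cases h : i = n
      · subst h; simp
      · rw [if_neg (fun hh => h (Nat.succ_injective hh)), if_neg h]
    rw [harg]
    have : ∀ y, cylMeas γ n y (fun i => A (i + 1)) C
        = cylProb γ n y fun i => if i = n then (fun j => A (j + 1)) n ∩ C else (fun j => A (j + 1)) i :=
      fun y => ih y (fun i => A (i + 1)) (fun i => hA (i + 1))
    rw [lintegral_congr fun y => this y]
    rfl

lemma aux_cylProb_congr {γ : EucN N → Measure (EucN N)} (n : ℕ) (x : EucN N)
    {A B : ℕ → Set (EucN N)} (h : ∀ i ≤ n, A i = B i) :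
    cylProb γ n x A = cylProb γ n x B := by
  induction n generalizing x A B with
  | zero => show (A 0).indicator 1 x = (B 0).indicator 1 x; rw [h 0 le_rfl]
  | succ n ih =>
    show (A 0).indicator 1 x * ∫⁻ y, cylProb γ n y (fun i => A (i + 1)) ∂(γ x)
      = (B 0).indicator 1 x * ∫⁻ y, cylProb γ n y (fun i => B (i + 1)) ∂(γ x)
    rw [h 0 (Nat.zero_le _)]
    congr 1
    exact lintegral_congr fun y => ih y (fun i hi => h (i + 1) (Nat.succ_le_succ hi))

lemma aux_cylMeas_peel {γ : EucN N → Measure (EucN N)} (hγ : Measurable γ)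
    (n : ℕ) (x : EucN N) (A : ℕ → Set (EucN N)) (hA : ∀ i, MeasurableSet (A i))
    {C : Set (EucN N)} (hC : MeasurableSet C) :
    cylMeas γ (n + 1) x A C = ∫⁻ y, γ y (A (n + 1) ∩ C) ∂(cylMeas γ n x A) := by
  have hACm : MeasurableSet (A (n + 1) ∩ C) := (hA (n + 1)).inter hC
  have hcoe : Measurable fun y => γ y (A (n + 1) ∩ C) :=
    (Measure.measurable_coe hACm).comp hγ
  induction n generalizing x A with
  | zero =>
    have hmeas0 := aux_cylMeas_measurable hγ 0 (fun i => A (i + 1)) (fun i => hA (i + 1))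
    show ((A 0).indicator (fun _ => (1 : ℝ≥0∞)) x •
        (γ x).bind (fun y => cylMeas γ 0 y (fun i => A (i + 1)))) C = _
    rw [Measure.smul_apply, Measure.bind_apply hC hmeas0.aemeasurable, smul_eq_mul]
    have h1 : ∀ y, cylMeas γ 0 y (fun i => A (i + 1)) C = (A 1 ∩ C).indicator (1 : EucN N → ℝ≥0∞) y := by
      intro y
      show ((Measure.dirac y).restrict (A 1)) C = _
      rw [Measure.restrict_apply hC, Measure.dirac_apply' _ (hC.inter (hA 1)), inter_comm]
    rw [lintegral_congr h1, lintegral_indicator_one ((hA 1).inter hC)]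
    show _ = ∫⁻ y in A 0, γ y (A 1 ∩ C) ∂(Measure.dirac x)
    rw [setLIntegral_dirac' hcoe (hA 0)]
    split_ifs with hx
    · rw [indicator_of_mem hx, one_mul]
    · rw [indicator_of_notMem hx, zero_mul]
  | succ n ih =>
    have hshift : ∀ i, MeasurableSet ((fun j => A (j + 1)) i) := fun i => hA (i + 1)
    have hmeasn := aux_cylMeas_measurable hγ (n + 1) (fun i => A (i + 1)) hshift
    have hmeasn' := aux_cylMeas_measurable hγ n (fun i => A (i + 1)) hshift
    have hlhs : cylMeas γ (n + 1 + 1) x A C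
        = (A 0).indicator (fun _ => (1 : ℝ≥0∞)) x *
            ∫⁻ y, cylMeas γ (n + 1) y (fun i => A (i + 1)) C ∂(γ x) := by
      show ((A 0).indicator (fun _ => (1 : ℝ≥0∞)) x •
          (γ x).bind (fun y => cylMeas γ (n + 1) y (fun i => A (i + 1)))) C = _
      rw [Measure.smul_apply, Measure.bind_apply hC hmeasn.aemeasurable, smul_eq_mul]
    have hrhs : ∫⁻ y, γ y (A (n + 1 + 1) ∩ C) ∂(cylMeas γ (n + 1) x A)
        = (A 0).indicator (fun _ => (1 : ℝ≥0∞)) x *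
            ∫⁻ y, (∫⁻ z, γ z (A (n + 1 + 1) ∩ C) ∂(cylMeas γ n y (fun i => A (i + 1)))) ∂(γ x) := by
      show ∫⁻ y, γ y (A (n + 1 + 1) ∩ C) ∂((A 0).indicator (fun _ => (1 : ℝ≥0∞)) x •
          (γ x).bind (fun y => cylMeas γ n y (fun i => A (i + 1)))) = _
      rw [lintegral_smul_measure, Measure.lintegral_bind hmeasn'.aemeasurable hcoe.aemeasurable, smul_eq_mul]
    rw [hlhs, hrhs]
    congr 1
    refine lintegral_congr fun y => ?_
    exact ih y (fun i => A (i + 1)) hshift hACm hcoe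

lemma aux_cylSet_meas {k : ℕ} {A : ℕ → Set (EucN N)} (hA : ∀ i, MeasurableSet (A i)) :
    MeasurableSet {ω : ℕ → EucN N | ∀ i ≤ k, ω i ∈ A i} := by
  have h : {ω : ℕ → EucN N | ∀ i ≤ k, ω i ∈ A i}
      = ⋂ i ∈ Iic k, (fun ω : ℕ → EucN N => ω i) ⁻¹' A i := by
    ext ω; simp [Set.mem_iInter]
  rw [h]
  exact MeasurableSet.biInter (to_countable _) fun i _ => (measurable_pi_apply i) (hA i)

/-- the π-system of cylinders of length `k`. -/
def cylSets (N : ℕ) (k : ℕ) : Set (Set (ℕ → EucN N)) :=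
  {s | ∃ A : ℕ → Set (EucN N), (∀ i, MeasurableSet (A i)) ∧ s = {ω | ∀ i ≤ k, ω i ∈ A i}}

lemma aux_isPiSystem_cylSets (k : ℕ) : IsPiSystem (cylSets N k) := by
  rintro s ⟨A, hA, rfl⟩ t ⟨B, hB, rfl⟩ -
  exact ⟨fun i => A i ∩ B i, fun i => (hA i).inter (hB i), by
    ext ω; simp only [mem_inter_iff, mem_setOf_eq, Set.mem_inter_iff]
    exact ⟨fun ⟨h1, h2⟩ i hi => ⟨h1 i hi, h2 i hi⟩, fun h => ⟨fun i hi => (h i hi).1,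
      fun i hi => (h i hi).2⟩⟩⟩

lemma aux_trajFilt_eq (k : ℕ) :
    ((trajFilt N) k : MeasurableSpace (ℕ → EucN N))
      = MeasurableSpace.generateFrom (cylSets N k) := by
  have hrfl : ((trajFilt N) k : MeasurableSpace (ℕ → EucN N))
      = ⨆ j, ⨆ _ : j ≤ k, MeasurableSpace.comap (fun ω : ℕ → EucN N => ω j)
          inferInstance := rfl
  rw [hrfl]
  apply le_antisymm
  · refine iSup_le fun j => iSup_le fun hj => ?_
    intro s hs
    obtain ⟨t, ht, rfl⟩ := hs
    refine MeasurableSpace.measurableSet_generateFrom ?_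
    refine ⟨fun i => if i = j then t else univ, fun i => ?_, ?_⟩
    · by_cases h : i = j <;> simp [h, ht]
    · ext ω
      simp only [mem_preimage, mem_setOf_eq]
      constructor
      · intro hω i hi
        by_cases h : i = j
        · subst h; simpa using hω
        · simp [h]
      · intro hω
        have := hω j hj
        simpa using this
  · refine MeasurableSpace.generateFrom_le ?_
    rintro s ⟨A, hA, rfl⟩
    have h : {ω : ℕ → EucN N | ∀ i ≤ k, ω i ∈ A i}
        = ⋂ i ∈ Iic k, (fun ω : ℕ → EucN N => ω i) ⁻¹' A i := by
      ext ω; simp [Set.mem_iInter]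
    rw [h]
    refine MeasurableSet.biInter (to_countable _) fun i hi => ?_
    have hle : MeasurableSpace.comap (fun ω : ℕ → EucN N => ω i) inferInstance
        ≤ ⨆ j, ⨆ _ : j ≤ k, MeasurableSpace.comap (fun ω : ℕ → EucN N => ω j)
            inferInstance :=
      le_iSup₂ (f := fun j (_ : j ≤ k) => MeasurableSpace.comap
        (fun ω : ℕ → EucN N => ω j) inferInstance) i hi
    exact hle _ ⟨A i, hA i, rfl⟩

lemma aux_key_lintegral {γ : EucN N → Measure (EucN N)} (hγ : Measurable γ)
    {x₀ : EucN N} {P : Measure (ℕ → EucN N)} (htraj : IsTrajMeasure γ x₀ P)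
    {A : ℕ → Set (EucN N)} (hA : ∀ i, MeasurableSet (A i))
    {v : EucN N → ℝ≥0∞} (hv : Measurable v) (k : ℕ) :
    ∫⁻ ω in {ω : ℕ → EucN N | ∀ i ≤ k, ω i ∈ A i}, v (ω (k + 1)) ∂P
      = ∫⁻ ω in {ω : ℕ → EucN N | ∀ i ≤ k, ω i ∈ A i}, (∫⁻ y, v y ∂γ (ω k)) ∂P := by
  set S := {ω : ℕ → EucN N | ∀ i ≤ k, ω i ∈ A i} with hSdef
  have hSm : MeasurableSet S := aux_cylSet_meas hA
  set Ahat : ℕ → Set (EucN N) := fun i => if i ≤ k then A i else univ with hAhatdef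
  have hAhatm : ∀ i, MeasurableSet (Ahat i) := fun i => by
    by_cases h : i ≤ k <;> simp [Ahat, h, hA i]
  have hVm : Measurable fun y => ∫⁻ z, v z ∂γ y :=
    (Measure.measurable_lintegral hv).comp hγ
  -- identify the law of the k-th coordinate on S
  have hAhatA : ∀ i ≤ k, Ahat i = A i := fun i hi => by simp [Ahat, hi]
  have hτ₀ : (P.restrict S).map (fun ω => ω k) = cylMeas γ k x₀ Ahat := by
    ext C hC
    rw [Measure.map_apply (measurable_pi_apply k) hC,
      Measure.restrict_apply ((measurable_pi_apply k) hC)]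
    set B : ℕ → Set (EucN N) := fun i => if i = k then A k ∩ C else A i with hBdef
    have hBm : ∀ i, MeasurableSet (B i) := fun i => by
      by_cases h : i = k <;> simp [B, h, hA i, (hA k).inter hC]
    have hset : (fun ω : ℕ → EucN N => ω k) ⁻¹' C ∩ S
        = {ω : ℕ → EucN N | ∀ i ≤ k, ω i ∈ B i} := by
      ext ω
      simp only [mem_inter_iff, mem_preimage, mem_setOf_eq, hSdef]
      constructor
      · rintro ⟨h1, h2⟩ i hi
        by_cases h : i = k
        · rw [hBdef]; simp only [if_pos h]; rw [h]; exact ⟨h2 k le_rfl, h1⟩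
        · rw [hBdef]; simp only [if_neg h]; exact h2 i hi
      · intro hω
        have hk := hω k le_rfl
        rw [hBdef] at hk; simp only [if_pos rfl] at hk
        refine ⟨hk.2, fun i hi => ?_⟩
        by_cases h : i = k
        · rw [h]; exact hk.1
        · have := hω i hi
          rw [hBdef] at this; simpa only [if_neg h] using this
    rw [hset, htraj.2 k _ hBm, aux_cylMeas_apply hγ k x₀ Ahat hAhatm hC]
    refine aux_cylProb_congr k x₀ fun i hi => ?_
    by_cases h : i = k
    · simp only [if_pos h, hBdef]
      rw [hAhatA k le_rfl]
    · simp only [if_neg h, hBdef]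
      exact (hAhatA i hi).symm
  have hτ₁ : (P.restrict S).map (fun ω => ω (k + 1)) = cylMeas γ (k + 1) x₀ Ahat := by
    ext C hC
    rw [Measure.map_apply (measurable_pi_apply (k + 1)) hC,
      Measure.restrict_apply ((measurable_pi_apply (k + 1)) hC)]
    set B : ℕ → Set (EucN N) := fun i => if i = k + 1 then C else A i with hBdef
    have hBm : ∀ i, MeasurableSet (B i) := fun i => by
      by_cases h : i = k + 1 <;> simp [B, h, hA i, hC]
    have hset : (fun ω : ℕ → EucN N => ω (k + 1)) ⁻¹' C ∩ S
        = {ω : ℕ → EucN N | ∀ i ≤ k + 1, ω i ∈ B i} := by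
      ext ω
      simp only [mem_inter_iff, mem_preimage, mem_setOf_eq, hSdef]
      constructor
      · rintro ⟨h1, h2⟩ i hi
        by_cases h : i = k + 1
        · rw [hBdef]; simp only [if_pos h]; rw [h]; exact h1
        · have hik : i ≤ k := by omega
          rw [hBdef]; simp only [if_neg h]; exact h2 i hik
      · intro hω
        have hk1 := hω (k + 1) le_rfl
        rw [hBdef] at hk1; simp only [if_pos rfl] at hk1
        refine ⟨hk1, fun i hi => ?_⟩
        have h : i ≠ k + 1 := by omega
        have := hω i (by omega)
        rw [hBdef] at this; simpa only [if_neg h] using this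
    rw [hset, htraj.2 (k + 1) _ hBm, aux_cylMeas_apply hγ (k + 1) x₀ Ahat hAhatm hC]
    refine aux_cylProb_congr (k + 1) x₀ fun i hi => ?_
    by_cases h : i = k + 1
    · simp only [if_pos h, hBdef]
      simp [Ahat, Nat.not_succ_le_self k]
    · have hik : i ≤ k := by omega
      simp only [if_neg h, hBdef]
      exact (hAhatA i hik).symm
  have hbind : cylMeas γ (k + 1) x₀ Ahat = (cylMeas γ k x₀ Ahat).bind γ := by
    ext C hC
    rw [Measure.bind_apply hC hγ.aemeasurable, aux_cylMeas_peel hγ k x₀ Ahat hAhatm hC]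
    have h : Ahat (k + 1) ∩ C = C := by
      simp [Ahat, Nat.not_succ_le_self k]
    rw [h]
  calc ∫⁻ ω in S, v (ω (k + 1)) ∂P
      = ∫⁻ y, v y ∂((P.restrict S).map (fun ω => ω (k + 1))) :=
        (lintegral_map hv (measurable_pi_apply (k + 1))).symm
    _ = ∫⁻ y, v y ∂((cylMeas γ k x₀ Ahat).bind γ) := by rw [hτ₁, hbind]
    _ = ∫⁻ y, (∫⁻ z, v z ∂γ y) ∂(cylMeas γ k x₀ Ahat) := Measure.lintegral_bind hγ.aemeasurable hv.aemeasurable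
    _ = ∫⁻ y, (∫⁻ z, v z ∂γ y) ∂((P.restrict S).map (fun ω => ω k)) := by rw [hτ₀]
    _ = ∫⁻ ω in S, (∫⁻ z, v z ∂γ (ω k)) ∂P := lintegral_map hVm (measurable_pi_apply k)

lemma aux_setLint_eq {γ : EucN N → Measure (EucN N)} (hγ : Measurable γ)
    {x₀ : EucN N} {P : Measure (ℕ → EucN N)} (htraj : IsTrajMeasure γ x₀ P)
    {v : EucN N → ℝ≥0∞} (hv : Measurable v) {c : ℝ≥0∞} (hc : c ≠ ∞) (hvb : ∀ x, v x ≤ c)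
    (hVb : ∀ x, (∫⁻ y, v y ∂γ x) ≤ c)
    (k : ℕ) {s : Set (ℕ → EucN N)} (hs : MeasurableSet[(trajFilt N) k] s) :
    ∫⁻ ω in s, v (ω (k + 1)) ∂P = ∫⁻ ω in s, (∫⁻ y, v y ∂γ (ω k)) ∂P := by
  haveI := htraj.1
  have hVm : Measurable fun x => ∫⁻ y, v y ∂γ x := (Measure.measurable_lintegral hv).comp hγ
  set μ₁ := P.withDensity (fun ω => v (ω (k + 1))) with hμ₁
  set μ₂ := P.withDensity (fun ω => ∫⁻ y, v y ∂γ (ω k)) with hμ₂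
  have hfin : ∀ u : (ℕ → EucN N) → ℝ≥0∞, (∀ ω, u ω ≤ c) → P.withDensity u univ ≤ c := by
    intro u hu
    rw [withDensity_apply _ MeasurableSet.univ, Measure.restrict_univ]
    calc ∫⁻ ω, u ω ∂P ≤ ∫⁻ _, c ∂P := lintegral_mono hu
      _ = c := by rw [lintegral_const, measure_univ, mul_one]
  have hμ₁fin : μ₁ univ ≤ c := hfin _ fun ω => hvb _
  have hμ₂fin : μ₂ univ ≤ c := hfin _ fun ω => hVb _
  have huniv : μ₁ univ = μ₂ univ := by
    have hkey := aux_key_lintegral hγ htraj (A := fun _ => univ)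
      (fun _ => MeasurableSet.univ) hv k
    have hU : {ω : ℕ → EucN N | ∀ i ≤ k, ω i ∈ univ} = univ :=
      eq_univ_of_forall (by simp)
    rw [hU] at hkey
    rw [hμ₁, hμ₂, withDensity_apply _ MeasurableSet.univ,
      withDensity_apply _ MeasurableSet.univ]
    exact hkey
  have main : ∀ t : Set (ℕ → EucN N), MeasurableSet[(trajFilt N) k] t → μ₁ t = μ₂ t := by
    refine @MeasurableSpace.induction_on_inter (ℕ → EucN N) ((trajFilt N) k) (fun t _ => μ₁ t = μ₂ t)
      (cylSets N k) (aux_trajFilt_eq k) (aux_isPiSystem_cylSets k)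
      ?_ ?_ ?_ ?_
    · simp
    · rintro t ⟨A, hA, rfl⟩
      rw [hμ₁, hμ₂, withDensity_apply _ (aux_cylSet_meas hA),
        withDensity_apply _ (aux_cylSet_meas hA)]
      exact aux_key_lintegral hγ htraj hA hv k
    · intro t htm ht
      have htm' : MeasurableSet t := (trajFilt N).le k t htm
      have h1 : μ₁ t ≠ ∞ :=
        (lt_of_le_of_lt (le_trans (measure_mono (subset_univ t)) hμ₁fin) hc.lt_top).ne
      have h2 : μ₂ t ≠ ∞ :=
        (lt_of_le_of_lt (le_trans (measure_mono (subset_univ t)) hμ₂fin) hc.lt_top).ne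
      rw [measure_compl htm' h1, measure_compl htm' h2, huniv, ht]
    · intro f hdisj hfm hf
      rw [measure_iUnion hdisj (fun i => (trajFilt N).le k _ (hfm i)),
        measure_iUnion hdisj (fun i => (trajFilt N).le k _ (hfm i))]
      exact tsum_congr hf
  have hs' : MeasurableSet s := (trajFilt N).le k s hs
  have := main s hs
  rwa [hμ₁, hμ₂, withDensity_apply _ hs', withDensity_apply _ hs'] at this

lemma aux_integrable_of_bounded {α : Type*} [MeasurableSpace α] {μ : Measure α}
    [IsFiniteMeasure μ] {f : α → ℝ} (hm : AEStronglyMeasurable f μ) {C : ℝ}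
    (hb : ∀ x, |f x| ≤ C) : Integrable f μ :=
  (integrable_const C).mono' hm (ae_of_all _ fun x => by simpa using hb x)

lemma aux_chain_ae {γ : EucN N → Measure (EucN N)} {S : Set (EucN N)} (hS : MeasurableSet S)
    (hprob : ∀ x, IsProbabilityMeasure (γ x)) (hnull : ∀ x ∈ S, γ x Sᶜ = 0)
    {x₀ : EucN N} (hx₀ : x₀ ∈ S) {P : Measure (ℕ → EucN N)} (htraj : IsTrajMeasure γ x₀ P) :
    ∀ᵐ ω ∂P, ∀ i, ω i ∈ S := by
  haveI := htraj.1
  have haux : ∀ n, ∀ x ∈ S, cylProb γ n x (fun _ => S) = 1 := by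
    intro n
    induction n with
    | zero =>
      intro x hx
      show S.indicator 1 x = 1
      rw [indicator_of_mem hx]; simp
    | succ n ih =>
      intro x hx
      show S.indicator 1 x * ∫⁻ y, cylProb γ n y (fun _ => S) ∂γ x = 1
      rw [indicator_of_mem hx]
      have hae : (fun y => cylProb γ n y (fun _ => S)) =ᵐ[γ x] fun _ => 1 := by
        rw [Filter.eventuallyEq_iff_exists_mem]
        refine ⟨S, ?_, fun y hy => ih y hy⟩
        rw [mem_ae_iff]
        exact hnull x hx
      rw [lintegral_congr_ae hae, lintegral_const, measure_univ, mul_one]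
      simp
  have hn : ∀ n : ℕ, P {ω : ℕ → EucN N | ∀ i ≤ n, ω i ∈ S}ᶜ = 0 := by
    intro n
    have hmeas : MeasurableSet {ω : ℕ → EucN N | ∀ i ≤ n, ω i ∈ S} :=
      aux_cylSet_meas (fun _ => hS)
    have h1 : P {ω : ℕ → EucN N | ∀ i ≤ n, ω i ∈ S} = 1 := by
      rw [htraj.2 n (fun _ => S) (fun _ => hS)]
      exact haux n x₀ hx₀
    rw [measure_compl hmeas (measure_ne_top _ _), measure_univ, h1, tsub_self]
  have hnull2 : P {ω : ℕ → EucN N | ∀ i, ω i ∈ S}ᶜ = 0 := by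
    have hsub : {ω : ℕ → EucN N | ∀ i, ω i ∈ S}ᶜ
        ⊆ ⋃ n, {ω : ℕ → EucN N | ∀ i ≤ n, ω i ∈ S}ᶜ := by
      intro ω hω
      simp only [mem_compl_iff, mem_setOf_eq, not_forall] at hω
      obtain ⟨i, hi⟩ := hω
      refine mem_iUnion.mpr ⟨i, ?_⟩
      simp only [mem_compl_iff, mem_setOf_eq, not_forall]
      exact ⟨i, le_rfl, hi⟩
    exact measure_mono_null hsub (measure_iUnion_null hn)
  rw [ae_iff]
  have heq : {a : ℕ → EucN N | ¬∀ i, a i ∈ S} = {ω : ℕ → EucN N | ∀ i, ω i ∈ S}ᶜ := by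
    ext ω; simp
  rw [heq]
  exact hnull2

lemma aux_core_real {γ : EucN N → Measure (EucN N)} (hγ : Measurable γ)
    (hprob : ∀ x, IsProbabilityMeasure (γ x))
    {x₀ : EucN N} {P : Measure (ℕ → EucN N)} (htraj : IsTrajMeasure γ x₀ P)
    {w' : EucN N → ℝ} (hw'm : Measurable w') {C : ℝ} (hC : ∀ x, |w' x| ≤ C)
    (k : ℕ) {s : Set (ℕ → EucN N)} (hs : MeasurableSet[(trajFilt N) k] s) :
    ∫ ω in s, w' (ω (k + 1)) ∂P
      = ∫ ω in s, ((∫⁻ y, ENNReal.ofReal (w' y) ∂γ (ω k)).toReal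
          - (∫⁻ y, ENNReal.ofReal (-w' y) ∂γ (ω k)).toReal) ∂P := by
  haveI := htraj.1
  have hsm : MeasurableSet s := (trajFilt N).le k s hs
  have hC0 : 0 ≤ C := le_trans (abs_nonneg _) (hC 0)
  have hv₁ : Measurable fun y => ENNReal.ofReal (w' y) := ENNReal.measurable_ofReal.comp hw'm
  have hv₂ : Measurable fun y => ENNReal.ofReal (-w' y) :=
    ENNReal.measurable_ofReal.comp hw'm.neg
  have hV₁m : Measurable fun x => ∫⁻ y, ENNReal.ofReal (w' y) ∂γ x :=
    (Measure.measurable_lintegral hv₁).comp hγ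
  have hV₂m : Measurable fun x => ∫⁻ y, ENNReal.ofReal (-w' y) ∂γ x :=
    (Measure.measurable_lintegral hv₂).comp hγ
  have hVb : ∀ (v : EucN N → ℝ≥0∞), (∀ y, v y ≤ ENNReal.ofReal C) →
      ∀ x, (∫⁻ y, v y ∂γ x) ≤ ENNReal.ofReal C := by
    intro v hv x
    haveI := hprob x
    calc ∫⁻ y, v y ∂γ x ≤ ∫⁻ _, ENNReal.ofReal C ∂γ x := lintegral_mono hv
      _ = ENNReal.ofReal C := by rw [lintegral_const, measure_univ, mul_one]
  have hb₁ : ∀ y, ENNReal.ofReal (w' y) ≤ ENNReal.ofReal C :=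
    fun y => ENNReal.ofReal_le_ofReal (le_trans (le_abs_self _) (hC y))
  have hb₂ : ∀ y, ENNReal.ofReal (-w' y) ≤ ENNReal.ofReal C :=
    fun y => ENNReal.ofReal_le_ofReal (le_trans (neg_le_abs _) (hC y))
  have hV₁b := hVb _ hb₁
  have hV₂b := hVb _ hb₂
  -- LHS
  have hint : Integrable (fun ω : ℕ → EucN N => w' (ω (k + 1))) (P.restrict s) :=
    aux_integrable_of_bounded
      ((hw'm.comp (measurable_pi_apply (k + 1))).aestronglyMeasurable) (fun ω => hC _)
  rw [integral_eq_lintegral_pos_part_sub_lintegral_neg_part hint]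
  have h1 := aux_setLint_eq hγ htraj hv₁ ENNReal.ofReal_ne_top hb₁ hV₁b k hs
  have h2 := aux_setLint_eq hγ htraj hv₂ ENNReal.ofReal_ne_top hb₂ hV₂b k hs
  rw [h1, h2]
  -- RHS
  have hint₁ : Integrable (fun ω : ℕ → EucN N =>
      (∫⁻ y, ENNReal.ofReal (w' y) ∂γ (ω k)).toReal) (P.restrict s) := by
    refine aux_integrable_of_bounded
      ((ENNReal.measurable_toReal.comp (hV₁m.comp (measurable_pi_apply k))).aestronglyMeasurable)
      (C := C) fun ω => ?_
    rw [abs_of_nonneg ENNReal.toReal_nonneg]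
    exact ENNReal.toReal_le_of_le_ofReal hC0 (hV₁b _)
  have hint₂ : Integrable (fun ω : ℕ → EucN N =>
      (∫⁻ y, ENNReal.ofReal (-w' y) ∂γ (ω k)).toReal) (P.restrict s) := by
    refine aux_integrable_of_bounded
      ((ENNReal.measurable_toReal.comp (hV₂m.comp (measurable_pi_apply k))).aestronglyMeasurable)
      (C := C) fun ω => ?_
    rw [abs_of_nonneg ENNReal.toReal_nonneg]
    exact ENNReal.toReal_le_of_le_ofReal hC0 (hV₂b _)
  rw [integral_sub hint₁ hint₂]
  have ham₁ : AEMeasurable (fun ω : ℕ → EucN N => ∫⁻ y, ENNReal.ofReal (w' y) ∂γ (ω k))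
      (P.restrict s) := (hV₁m.comp (measurable_pi_apply k)).aemeasurable
  have ham₂ : AEMeasurable (fun ω : ℕ → EucN N => ∫⁻ y, ENNReal.ofReal (-w' y) ∂γ (ω k))
      (P.restrict s) := (hV₂m.comp (measurable_pi_apply k)).aemeasurable
  rw [integral_toReal ham₁
    (ae_of_all _ fun ω => lt_of_le_of_lt (hV₁b _) ENNReal.ofReal_lt_top)]
  rw [integral_toReal ham₂
    (ae_of_all _ fun ω => lt_of_le_of_lt (hV₂b _) ENNReal.ofReal_lt_top)]

lemma aux_integral_gamKer {q ε : ℝ} (hq0 : 0 ≤ q) (hq1 : q ≤ 1) (hε : 0 < ε)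
    {Ω : Set (EucN N)} {σ : EucN N → EucN N} {x : EucN N} (hx : x ∈ closure Ω)
    {f : EucN N → ℝ} (hfm : Measurable f) {C : ℝ} (hfb : ∀ y, |f y| ≤ C) :
    ∫ y, f y ∂(gamKer q ε Ω σ x) = mveOp q ε f (σ x) x := by
  have hb0 : volume (ball x ε) ≠ 0 := (measure_ball_pos _ _ hε).ne'
  have hbt : volume (ball x ε) ≠ ∞ := measure_ball_lt_top.ne
  set μ₀ := (volume (ball x ε))⁻¹ • volume.restrict (ball x ε) with hμ₀
  haveI hμ₀p : IsProbabilityMeasure μ₀ := by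
    constructor
    rw [hμ₀, Measure.smul_apply, Measure.restrict_apply_univ, smul_eq_mul,
      ENNReal.inv_mul_cancel hb0 hbt]
  have hintf : ∀ (μ : Measure (EucN N)), IsFiniteMeasure μ → Integrable f μ := fun μ hμ =>
    @aux_integrable_of_bounded _ _ μ hμ f hfm.aestronglyMeasurable C hfb
  haveI hfin1 : IsFiniteMeasure (ENNReal.ofReal q • μ₀) := by
    constructor
    rw [Measure.smul_apply, measure_univ, smul_eq_mul, mul_one]
    exact ENNReal.ofReal_lt_top
  haveI hfin2 : IsFiniteMeasure (ENNReal.ofReal ((1 - q) / 2) •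
      (Measure.dirac (x + ε • σ x) + Measure.dirac (x - ε • σ x))) := by
    constructor
    rw [Measure.smul_apply, Measure.add_apply, measure_univ, measure_univ, smul_eq_mul]
    exact ENNReal.mul_lt_top ENNReal.ofReal_lt_top (by norm_num)
  haveI hfin3 : IsFiniteMeasure
      (Measure.dirac (x + ε • σ x) + Measure.dirac (x - ε • σ x)) := by
    constructor
    rw [Measure.add_apply, measure_univ, measure_univ]
    norm_num
  have hA : ∫ y, f y ∂(ENNReal.ofReal q • μ₀) = q * ⨍ y in ball x ε, f y := by
    rw [integral_smul_measure, ENNReal.toReal_ofReal hq0, hμ₀,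
      ← setAverage_eq' volume f (ball x ε), smul_eq_mul]
  have hB : ∫ y, f y ∂(ENNReal.ofReal ((1 - q) / 2) •
      (Measure.dirac (x + ε • σ x) + Measure.dirac (x - ε • σ x)))
      = (1 - q) / 2 * (f (x + ε • σ x) + f (x - ε • σ x)) := by
    rw [integral_smul_measure, ENNReal.toReal_ofReal (by linarith : (0:ℝ) ≤ (1 - q) / 2),
      integral_add_measure (hintf _ inferInstance) (hintf _ inferInstance),
      integral_dirac' _ _ hfm.stronglyMeasurable, integral_dirac' _ _ hfm.stronglyMeasurable,
      smul_eq_mul]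
  rw [gamKer, if_pos hx,
    integral_add_measure (hintf _ inferInstance) (hintf _ inferInstance), ← hμ₀, hA, hB, mveOp]
  ring

lemma aux_mveOp_indicator {q ε : ℝ} (hε : 0 < ε) {Ω : Set (EucN N)} {x ξ : EucN N}
    (hx : x ∈ closure Ω) (hξ : ‖ξ‖ = 1) (w : EucN N → ℝ) :
    mveOp q ε ((Oeps Ω ε).indicator w) ξ x = mveOp q ε w ξ x := by
  have h1 : ∫ y in ball x ε, (Oeps Ω ε).indicator w y ∂volume
      = ∫ y in ball x ε, w y ∂volume :=
    setIntegral_congr_fun measurableSet_ball fun y hy =>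
      indicator_of_mem (aux_dist_mem_oeps hx (mem_ball.mp hy).le) w
  have h2 : (Oeps Ω ε).indicator w (x + ε • ξ) = w (x + ε • ξ) :=
    indicator_of_mem (aux_pt_mem_oeps hε hx hξ).1 w
  have h3 : (Oeps Ω ε).indicator w (x - ε • ξ) = w (x - ε • ξ) :=
    indicator_of_mem (aux_pt_mem_oeps hε hx hξ).2 w
  rw [mveOp, mveOp, setAverage_eq, setAverage_eq, h1, h2, h3]

lemma aux_mveOp_neg (q ε : ℝ) (w : EucN N → ℝ) (ξ x : EucN N) :
    mveOp q ε (fun y => -w y) ξ x = -mveOp q ε w ξ x := by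
  rw [mveOp, mveOp, setAverage_eq, setAverage_eq]
  rw [show ∫ y in ball x ε, -w y ∂volume = -∫ y in ball x ε, w y ∂volume from integral_neg _]
  simp only [smul_eq_mul]
  ring

lemma aux_abs_mveOp_le {q ε : ℝ} (hq0 : 0 ≤ q) (hq1 : q ≤ 1) (hε : 0 < ε)
    {Ω : Set (EucN N)} {w : EucN N → ℝ} (hwm : Measurable w) {C : ℝ}
    (hwC : ∀ y ∈ Oeps Ω ε, |w y| ≤ C) {x : EucN N} (hx : x ∈ closure Ω) {ξ : EucN N}
    (hξ : ‖ξ‖ = 1) : |mveOp q ε w ξ x| ≤ C := by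
  have hC0 : 0 ≤ C := le_trans (abs_nonneg _) (hwC x (aux_closure_subset_oeps hε.le hx))
  have hpos : 0 < (volume (ball x ε)).toReal :=
    ENNReal.toReal_pos (measure_ball_pos _ _ hε).ne' measure_ball_lt_top.ne
  have havg : |⨍ y in ball x ε, w y| ≤ C := by
    rw [setAverage_eq, smul_eq_mul, abs_mul, abs_inv, abs_of_pos (show 0 < volume.real (ball x ε) from hpos)]
    have hb : ‖∫ y in ball x ε, w y ∂volume‖ ≤ C * (volume (ball x ε)).toReal :=
      norm_setIntegral_le_of_norm_le_const measure_ball_lt_top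
        (fun y hy => by
          rw [Real.norm_eq_abs]
          exact hwC y (aux_dist_mem_oeps hx (mem_ball.mp hy).le))
    rw [Real.norm_eq_abs] at hb
    have h2 := mul_le_mul_of_nonneg_left hb (inv_nonneg.mpr hpos.le)
    have h3 : (volume (ball x ε)).toReal⁻¹ * (C * (volume (ball x ε)).toReal) = C := by
      field_simp
    rw [h3] at h2
    exact h2
  have hp : |w (x + ε • ξ)| ≤ C := hwC _ (aux_pt_mem_oeps hε hx hξ).1
  have hm : |w (x - ε • ξ)| ≤ C := hwC _ (aux_pt_mem_oeps hε hx hξ).2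
  rw [mveOp]
  have e1 : |q * (⨍ y in ball x ε, w y)| ≤ q * C := by
    rw [abs_mul, abs_of_nonneg hq0]
    exact mul_le_mul_of_nonneg_left havg hq0
  have e2 : |(1 - q) * ((w (x + ε • ξ) + w (x - ε • ξ)) / 2)| ≤ (1 - q) * C := by
    rw [abs_mul, abs_of_nonneg (by linarith : (0:ℝ) ≤ 1 - q)]
    refine mul_le_mul_of_nonneg_left ?_ (by linarith)
    rw [abs_div]
    rw [show |(2:ℝ)| = 2 from abs_of_pos two_pos]
    rw [div_le_iff₀ two_pos]
    calc |w (x + ε • ξ) + w (x - ε • ξ)| ≤ |w (x + ε • ξ)| + |w (x - ε • ξ)| := abs_add_le _ _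
      _ ≤ C * 2 := by linarith [hp, hm]
  calc |q * (⨍ y in ball x ε, w y) + (1 - q) * ((w (x + ε • ξ) + w (x - ε • ξ)) / 2)|
      ≤ |q * (⨍ y in ball x ε, w y)| + |(1 - q) * ((w (x + ε • ξ) + w (x - ε • ξ)) / 2)| :=
        abs_add_le _ _
    _ ≤ q * C + (1 - q) * C := add_le_add e1 e2
    _ = C := by ring

lemma aux_mveOp_le_mvOp {q ε : ℝ} (hq0 : 0 ≤ q) (hq1 : q ≤ 1) (hε : 0 < ε)
    {Ω : Set (EucN N)} {w : EucN N → ℝ} (hwm : Measurable w) {C : ℝ}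
    (hwC : ∀ y ∈ Oeps Ω ε, |w y| ≤ C) {x : EucN N} (hx : x ∈ closure Ω) {ξ : EucN N}
    (hξ : ‖ξ‖ = 1) : mveOp q ε w ξ x ≤ mvOp q ε w x := by
  haveI : Nonempty (sphere (0 : EucN N) 1) := ⟨⟨ξ, by simpa [mem_sphere_zero_iff_norm] using hξ⟩⟩
  have hbdd : BddAbove (range fun ζ : sphere (0 : EucN N) 1 => mveOp q ε w (ζ : EucN N) x) := by
    refine ⟨C, ?_⟩
    rintro _ ⟨⟨ζ, hζ⟩, rfl⟩
    exact (abs_le.mp (aux_abs_mveOp_le hq0 hq1 hε hwm hwC hx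
      (mem_sphere_zero_iff_norm.mp hζ))).2
  exact le_ciSup hbdd (⟨ξ, by simpa [mem_sphere_zero_iff_norm] using hξ⟩ :
    sphere (0 : EucN N) 1)

lemma aux_master {q ε : ℝ} (hq0 : 0 ≤ q) (hq1 : q ≤ 1) (hε : 0 < ε) {Ω : Set (EucN N)}
    {w : EucN N → ℝ} (hwm : Measurable w) {C : ℝ} (hwC : ∀ x ∈ Oeps Ω ε, |w x| ≤ C)
    {C₁ : ℝ} (hC₁ : 0 < C₁)
    {σ : EucN N → EucN N} (hσ : IsControl σ)
    {x₀ : EucN N} (hx₀ : x₀ ∈ Oeps Ω ε) {P : Measure (ℕ → EucN N)}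
    (htraj : IsTrajMeasure (gamKer q ε Ω σ) x₀ P)
    (hcmp : ∀ x ∈ closure Ω, mveOp q ε w (σ x) x ≤ w x + C₁ * ε ^ 3) :
    Supermartingale (fun (k : ℕ) (ω : ℕ → EucN N) => w (ω k) - C₁ * k * ε ^ 3)
      (trajFilt N) P := by
  haveI hPp : IsProbabilityMeasure P := htraj.1
  have hC0 : 0 ≤ C := le_trans (abs_nonneg _) (hwC x₀ hx₀)
  set γ := gamKer q ε Ω σ with hγdef
  have hγm : Measurable γ := aux_gamKer_measurable hσ.1
  have hγp : ∀ x, IsProbabilityMeasure (γ x) := aux_gamKer_prob hq0 hq1 hε Ω σ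
  have hγnull : ∀ x ∈ Oeps Ω ε, γ x (Oeps Ω ε)ᶜ = 0 := fun x hx => aux_gamKer_null hε hσ.2 hx
  set w' : EucN N → ℝ := (Oeps Ω ε).indicator w with hw'def
  have hw'm : Measurable w' := hwm.indicator (aux_measurableSet_oeps Ω ε)
  have hw'b : ∀ x, |w' x| ≤ C := by
    intro x
    by_cases hx : x ∈ Oeps Ω ε
    · rw [hw'def, indicator_of_mem hx]; exact hwC x hx
    · rw [hw'def, indicator_of_notMem hx, abs_zero]; exact hC0
  -- the one-step conditional mean
  set G : EucN N → ℝ := fun x => (∫⁻ y, ENNReal.ofReal (w' y) ∂γ x).toReal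
    - (∫⁻ y, ENNReal.ofReal (-w' y) ∂γ x).toReal with hGdef
  have hv₁ : Measurable fun y => ENNReal.ofReal (w' y) := ENNReal.measurable_ofReal.comp hw'm
  have hv₂ : Measurable fun y => ENNReal.ofReal (-w' y) :=
    ENNReal.measurable_ofReal.comp hw'm.neg
  have hV₁m : Measurable fun x => ∫⁻ y, ENNReal.ofReal (w' y) ∂γ x :=
    (Measure.measurable_lintegral hv₁).comp hγm
  have hV₂m : Measurable fun x => ∫⁻ y, ENNReal.ofReal (-w' y) ∂γ x :=
    (Measure.measurable_lintegral hv₂).comp hγm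
  have hGm : Measurable G := (ENNReal.measurable_toReal.comp hV₁m).sub
    (ENNReal.measurable_toReal.comp hV₂m)
  have hVb : ∀ (v : EucN N → ℝ≥0∞), (∀ y, v y ≤ ENNReal.ofReal C) →
      ∀ x, (∫⁻ y, v y ∂γ x) ≤ ENNReal.ofReal C := by
    intro v hv x
    haveI := hγp x
    calc ∫⁻ y, v y ∂γ x ≤ ∫⁻ _, ENNReal.ofReal C ∂γ x := lintegral_mono hv
      _ = ENNReal.ofReal C := by rw [lintegral_const, measure_univ, mul_one]
  have hV₁b := hVb _ fun y => ENNReal.ofReal_le_ofReal (le_trans (le_abs_self _) (hw'b y))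
  have hV₂b := hVb _ fun y => ENNReal.ofReal_le_ofReal (le_trans (neg_le_abs _) (hw'b y))
  have hGb : ∀ x, |G x| ≤ C + C := by
    intro x
    have h1 : (∫⁻ y, ENNReal.ofReal (w' y) ∂γ x).toReal ≤ C :=
      ENNReal.toReal_le_of_le_ofReal hC0 (hV₁b x)
    have h2 : (∫⁻ y, ENNReal.ofReal (-w' y) ∂γ x).toReal ≤ C :=
      ENNReal.toReal_le_of_le_ofReal hC0 (hV₂b x)
    have h3 := ENNReal.toReal_nonneg (a := ∫⁻ y, ENNReal.ofReal (w' y) ∂γ x)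
    have h4 := ENNReal.toReal_nonneg (a := ∫⁻ y, ENNReal.ofReal (-w' y) ∂γ x)
    show |(∫⁻ y, ENNReal.ofReal (w' y) ∂γ x).toReal
        - (∫⁻ y, ENNReal.ofReal (-w' y) ∂γ x).toReal| ≤ C + C
    rw [abs_le]
    constructor <;> linarith
  -- pointwise comparison
  have hGle : ∀ x ∈ Oeps Ω ε, G x ≤ w' x + C₁ * ε ^ 3 := by
    intro x hx
    by_cases hcl : x ∈ closure Ω
    · haveI := hγp x
      have hintw' : Integrable w' (γ x) :=
        aux_integrable_of_bounded hw'm.aestronglyMeasurable hw'b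
      have h1 : ∫ y, w' y ∂γ x = G x := by
        show _ = (∫⁻ y, ENNReal.ofReal (w' y) ∂γ x).toReal
            - (∫⁻ y, ENNReal.ofReal (-w' y) ∂γ x).toReal
        rw [integral_eq_lintegral_pos_part_sub_lintegral_neg_part hintw']
      have h2 : ∫ y, w' y ∂γ x = mveOp q ε w' (σ x) x :=
        aux_integral_gamKer hq0 hq1 hε hcl hw'm hw'b
      have h3 : mveOp q ε w' (σ x) x = mveOp q ε w (σ x) x := by
        rw [hw'def]
        exact aux_mveOp_indicator hε hcl (hσ.2 x) w
      have h4 : w x = w' x := by rw [hw'def, indicator_of_mem hx]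
      have := hcmp x hcl
      rw [← h1, h2, h3]
      linarith
    · have hdir : γ x = Measure.dirac x := by rw [hγdef, gamKer, if_neg hcl]
      have h1 : G x = w' x := by
        show (∫⁻ y, ENNReal.ofReal (w' y) ∂γ x).toReal
            - (∫⁻ y, ENNReal.ofReal (-w' y) ∂γ x).toReal = w' x
        rw [hdir, lintegral_dirac' _ hv₁, lintegral_dirac' _ hv₂, aux_tor]
      rw [h1]
      nlinarith [pow_pos hε 3]
  -- a.e. the chain stays in Oeps
  have hae : ∀ᵐ ω ∂P, ∀ i, ω i ∈ Oeps Ω ε :=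
    aux_chain_ae (aux_measurableSet_oeps Ω ε) hγp hγnull hx₀ htraj
  -- coordinate maps are measurable for the filtration
  have hev : ∀ k : ℕ, Measurable[(trajFilt N) k] fun ω : ℕ → EucN N => ω k := by
    intro k
    intro t ht
    rw [aux_trajFilt_eq k]
    refine MeasurableSpace.measurableSet_generateFrom ?_
    refine ⟨fun i => if i = k then t else univ, fun i => ?_, ?_⟩
    · by_cases h : i = k <;> simp [h, ht]
    · ext ω
      simp only [mem_preimage, mem_setOf_eq]
      constructor
      · intro hω i hi
        by_cases h : i = k
        · rw [if_pos h, h]; exact hω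
        · simp [if_neg h]
      · intro hω
        have := hω k le_rfl
        simpa using this
  -- integrability of the coordinates
  have hintw : ∀ k : ℕ, Integrable (fun ω : ℕ → EucN N => w (ω k)) P := by
    intro k
    have h1 : Integrable (fun ω : ℕ → EucN N => w' (ω k)) P :=
      aux_integrable_of_bounded
        ((hw'm.comp (measurable_pi_apply k)).aestronglyMeasurable) (fun ω => hw'b _)
    refine h1.congr (hae.mono fun ω h => ?_)
    show w' (ω k) = w (ω k)
    rw [hw'def, indicator_of_mem (h k)]
  refine supermartingale_of_setIntegral_succ_le ?_ ?_ ?_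
  · intro k
    exact ((hwm.comp (hev k)).sub measurable_const).stronglyMeasurable
  · intro k
    exact (hintw k).sub (integrable_const _)
  · intro k s hs
    have hsm : MeasurableSet s := (trajFilt N).le k s hs
    have hPs0 : (0:ℝ) ≤ (P s).toReal := ENNReal.toReal_nonneg
    -- integrability facts on the restriction
    have hIk : Integrable (fun ω : ℕ → EucN N => w (ω k)) (P.restrict s) :=
      (hintw k).restrict
    have hIk1 : Integrable (fun ω : ℕ → EucN N => w (ω (k + 1))) (P.restrict s) :=
      (hintw (k + 1)).restrict
    have hIG : Integrable (fun ω : ℕ → EucN N => G (ω k)) (P.restrict s) :=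
      (aux_integrable_of_bounded
        ((hGm.comp (measurable_pi_apply k)).aestronglyMeasurable) (fun ω => hGb _)).restrict
    have hIw' : Integrable (fun ω : ℕ → EucN N => w' (ω k)) (P.restrict s) :=
      (aux_integrable_of_bounded
        ((hw'm.comp (measurable_pi_apply k)).aestronglyMeasurable) (fun ω => hw'b _)).restrict
    -- chain of (in)equalities
    have e1 : ∫ ω in s, w (ω (k + 1)) ∂P = ∫ ω in s, w' (ω (k + 1)) ∂P :=
      setIntegral_congr_ae hsm (hae.mono fun ω h _ => by
        show w (ω (k + 1)) = w' (ω (k + 1))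
        rw [hw'def, indicator_of_mem (h (k + 1))])
    have e2 : ∫ ω in s, w' (ω (k + 1)) ∂P = ∫ ω in s, G (ω k) ∂P :=
      aux_core_real hγm hγp htraj hw'm hw'b k hs
    have e3 : ∫ ω in s, G (ω k) ∂P ≤ ∫ ω in s, (w' (ω k) + C₁ * ε ^ 3) ∂P := by
      refine setIntegral_mono_ae hIG (hIw'.add (integrable_const _)) ?_
      exact hae.mono fun ω h => hGle _ (h k)
    have e4 : ∫ ω in s, (w' (ω k) + C₁ * ε ^ 3) ∂P
        = ∫ ω in s, w' (ω k) ∂P + (P s).toReal * (C₁ * ε ^ 3) := by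
      rw [integral_add hIw' (integrable_const _), setIntegral_const, smul_eq_mul]
      rfl
    have e5 : ∫ ω in s, w' (ω k) ∂P = ∫ ω in s, w (ω k) ∂P :=
      setIntegral_congr_ae hsm (hae.mono fun ω h _ => by
        show w' (ω k) = w (ω k)
        rw [hw'def, indicator_of_mem (h k)])
    have e6 : ∫ ω in s, (w (ω (k + 1)) - C₁ * (↑(k + 1)) * ε ^ 3) ∂P
        = ∫ ω in s, w (ω (k + 1)) ∂P - (P s).toReal * (C₁ * (↑(k + 1)) * ε ^ 3) := by
      rw [integral_sub hIk1 (integrable_const _), setIntegral_const, smul_eq_mul]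
      rfl
    have e7 : ∫ ω in s, (w (ω k) - C₁ * (↑k) * ε ^ 3) ∂P
        = ∫ ω in s, w (ω k) ∂P - (P s).toReal * (C₁ * (↑k) * ε ^ 3) := by
      rw [integral_sub hIk (integrable_const _), setIntegral_const, smul_eq_mul]
      rfl
    rw [e6, e7]
    have hcast : (P s).toReal * (C₁ * (↑(k + 1) : ℝ) * ε ^ 3)
        = (P s).toReal * (C₁ * (↑k : ℝ) * ε ^ 3) + (P s).toReal * (C₁ * ε ^ 3) := by
      push_cast
      ring
    linarith [e1, e2, e3, e4, e5, hcast]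

/-- if `|M^ε w − w| ≤ C₁ ε³` on `closure Ω`, then (i) for every Borel
control `σ` the sequence `w(x_k) − C₁ k ε³` is a supermartingale, and (ii) for an
optimal Borel control `σ₀` the sequence `w(x_k) + C₁ k ε³` is a submartingale. -/
theorem sub_super_martingale (hN : 2 ≤ N) (p q ε : ℝ) (hp : 2 ≤ p)
    (hq : q = ((N : ℝ) + 2) / ((N : ℝ) + p)) (hε : 0 < ε)
    (Ω : Set (EucN N)) (hΩo : IsOpen Ω) (hΩb : Bornology.IsBounded Ω)
    (w : EucN N → ℝ) (hwm : Measurable w) (hwb : ∃ C, ∀ x ∈ Oeps Ω ε, |w x| ≤ C)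
    (C₁ : ℝ) (hC₁ : 0 < C₁)
    (hexp : ∀ x ∈ closure Ω, |mvOp q ε w x - w x| ≤ C₁ * ε ^ 3)
    (x₀ : EucN N) (hx₀ : x₀ ∈ Oeps Ω ε) :
    (∀ σ : EucN N → EucN N, IsControl σ →
      ∀ P : Measure (ℕ → EucN N), IsTrajMeasure (gamKer q ε Ω σ) x₀ P →
        Supermartingale (fun (k : ℕ) (ω : ℕ → EucN N) => w (ω k) - C₁ * k * ε ^ 3)
          (trajFilt N) P) ∧
    ∀ σ₀ : EucN N → EucN N, IsControl σ₀ →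
      (∀ x ∈ closure Ω, mveOp q ε w (σ₀ x) x = mvOp q ε w x) →
      ∀ P : Measure (ℕ → EucN N), IsTrajMeasure (gamKer q ε Ω σ₀) x₀ P →
        Submartingale (fun (k : ℕ) (ω : ℕ → EucN N) => w (ω k) + C₁ * k * ε ^ 3)
          (trajFilt N) P := by
  obtain ⟨C, hwC⟩ := hwb
  have hN0 : (0 : ℝ) < (N : ℝ) + p := by
    have : (0:ℝ) ≤ (N:ℝ) := Nat.cast_nonneg N
    linarith
  have hq0 : 0 ≤ q := by
    rw [hq]; positivity
  have hq1 : q ≤ 1 := by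
    rw [hq, div_le_one hN0]; linarith
  constructor
  · intro σ hσ P hP
    refine aux_master hq0 hq1 hε hwm hwC hC₁ hσ hx₀ hP fun x hx => ?_
    have h1 := aux_mveOp_le_mvOp hq0 hq1 hε hwm hwC hx (hσ.2 x)
    have h2 := (abs_le.mp (hexp x hx)).2
    linarith
  · intro σ₀ hσ₀ hopt P hP
    have hwC' : ∀ x ∈ Oeps Ω ε, |(fun y => -w y) x| ≤ C := fun x hx => by
      simpa [abs_neg] using hwC x hx
    have hsup := aux_master hq0 hq1 hε hwm.neg hwC' hC₁ hσ₀ hx₀ hP (fun x hx => by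
      rw [show (-w) = fun y => -w y from rfl, aux_mveOp_neg]
      have h1 := hopt x hx
      have h2 := (abs_le.mp (hexp x hx)).1
      show -mveOp q ε w (σ₀ x) x ≤ -w x + C₁ * ε ^ 3
      linarith)
    have h := hsup.neg
    have heq : (fun (k : ℕ) (ω : ℕ → EucN N) => w (ω k) + C₁ * k * ε ^ 3)
        = -(fun (k : ℕ) (ω : ℕ → EucN N) => (fun y => -w y) (ω k) - C₁ * k * ε ^ 3) := by
      funext k ω
      simp only [Pi.neg_apply]
      ring
    rw [heq]
    exact h

end
end
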